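/- arXiv:0912.3516 — 6 statements merged into one kernel-verified Lean document; each statement's English description precedes it below -/
import Mathlib

section
/- Let Θ be uniformly distributed on (-π, π), let z ∈ [0,1), and write α = arccos(z). Then for every γ ∈ [0, π/2], the probability P(cos Θ > z and sin(Θ + γ) > z) equals (1/(2π)) · max(2α - π/2 + γ, 0). -/
open MeasureTheory Real

theorem uniform_angle_joint_prob
    {Ω : Type*} [MeasureSpace Ω] (ℙ : Measure Ω) [IsProbabilityMeasure ℙ]
    (Θ : Ω → ℝ) (hΘ : Measure.map Θ ℙ =
      (ENNReal.ofReal (2 * Real.pi))⁻¹ • volume.restrict (Set.Ioo (-Real.pi) Real.pi))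
    (z : ℝ) (hz : z ∈ Set.Ico (0 : ℝ) 1) (γ : ℝ) (hγ : γ ∈ Set.Icc (0 : ℝ) (Real.pi / 2)) :
    ℙ {ω | Real.cos (Θ ω) > z ∧ Real.sin (Θ ω + γ) > z} =
      ENNReal.ofReal ((1 / (2 * Real.pi)) * max (2 * Real.arccos z - Real.pi / 2 + γ) 0) := by
  obtain ⟨hz0, hz1⟩ := hz
  obtain ⟨hγ0, hγ1⟩ := hγ
  have hπ := Real.pi_pos
  set α := Real.arccos z with hα
  have hα0 : 0 < α := Real.arccos_pos.2 hz1
  have hαπ2 : α ≤ Real.pi / 2 := Real.arccos_le_pi_div_two.2 hz0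
  have hcosα : Real.cos α = z := Real.cos_arccos (by linarith) (by linarith)
  -- the set on the real line
  set S : Set ℝ := {θ : ℝ | Real.cos θ > z ∧ Real.sin (θ + γ) > z} with hS
  have hSm : MeasurableSet S := by
    apply MeasurableSet.inter
    · exact measurableSet_lt measurable_const Real.measurable_cos
    · exact measurableSet_lt measurable_const
        (Real.measurable_sin.comp (measurable_id.add_const γ))
  -- ae-measurability of Θ
  have hΘm : AEMeasurable Θ ℙ := by
    by_contra h
    rw [Measure.map_of_not_aemeasurable h] at hΘ
    have h0 := congrArg (fun μ : Measure ℝ => μ Set.univ) hΘ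
    simp only [Measure.coe_zero, Pi.zero_apply, Measure.smul_apply, smul_eq_mul,
      Measure.restrict_apply_univ, Real.volume_Ioo] at h0
    have h2π : (0:ℝ) < 2 * Real.pi := by linarith
    rw [eq_comm, mul_eq_zero] at h0
    rcases h0 with h0 | h0
    · rw [ENNReal.inv_eq_zero] at h0
      exact (ENNReal.ofReal_ne_top) h0
    · rw [ENNReal.ofReal_eq_zero] at h0
      linarith
  have key : S ∩ Set.Ioo (-Real.pi) Real.pi
      = Set.Ioo (Real.pi / 2 - α - γ) α := by
    ext θ
    simp only [hS, Set.mem_inter_iff, Set.mem_setOf_eq, Set.mem_Ioo, gt_iff_lt]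
    constructor
    · rintro ⟨⟨h1, h2⟩, hθ1, hθ2⟩
      have hθα : |θ| < α := by
        have habs : |θ| ∈ Set.Icc 0 Real.pi := ⟨abs_nonneg θ, abs_le.2 ⟨hθ1.le, hθ2.le⟩⟩
        have hαmem : α ∈ Set.Icc 0 Real.pi := ⟨hα0.le, by linarith⟩
        have := (Real.strictAntiOn_cos.lt_iff_gt hαmem habs).1
          (by rwa [Real.cos_abs, hcosα])
        exact this
      have hθα' : -α < θ ∧ θ < α := abs_lt.1 hθα
      have hsin : Real.cos (θ + γ - Real.pi / 2) = Real.sin (θ + γ) := by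
        rw [show θ + γ - Real.pi / 2 = -(Real.pi / 2 - (θ + γ)) by ring, Real.cos_neg,
          Real.cos_pi_div_two_sub]
      have habs2 : |θ + γ - Real.pi / 2| ≤ Real.pi := by
        rw [abs_le]
        constructor <;> nlinarith [hθα'.1, hθα'.2]
      have h2' : |θ + γ - Real.pi / 2| < α := by
        have habs2' : |θ + γ - Real.pi / 2| ∈ Set.Icc 0 Real.pi :=
          ⟨abs_nonneg _, habs2⟩
        have hαmem : α ∈ Set.Icc 0 Real.pi := ⟨hα0.le, by linarith⟩
        exact (Real.strictAntiOn_cos.lt_iff_gt hαmem habs2').1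
          (by rwa [Real.cos_abs, hsin, hcosα])
      have := (abs_lt.1 h2').1
      constructor <;> [linarith; exact hθα'.2]
    · rintro ⟨hl, hr⟩
      have hθα : |θ| < α := abs_lt.2 ⟨by linarith, hr⟩
      have hc : z < Real.cos θ := by
        rw [← hcosα, ← Real.cos_abs θ]
        exact Real.cos_lt_cos_of_nonneg_of_le_pi (abs_nonneg θ) (by linarith) hθα
      have h2' : |θ + γ - Real.pi / 2| < α := by
        rw [abs_lt]; constructor <;> linarith
      have hs : z < Real.sin (θ + γ) := by
        have hsin : Real.cos (θ + γ - Real.pi / 2) = Real.sin (θ + γ) := by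
          rw [show θ + γ - Real.pi / 2 = -(Real.pi / 2 - (θ + γ)) by ring, Real.cos_neg,
            Real.cos_pi_div_two_sub]
        rw [← hsin, ← hcosα, ← Real.cos_abs (θ + γ - Real.pi / 2)]
        exact Real.cos_lt_cos_of_nonneg_of_le_pi (abs_nonneg _) (by linarith) h2'
      refine ⟨⟨hc, hs⟩, ?_, ?_⟩ <;> [nlinarith; linarith]
  have hmap : ℙ {ω | Real.cos (Θ ω) > z ∧ Real.sin (Θ ω + γ) > z}
      = Measure.map Θ ℙ S := by
    rw [Measure.map_apply_of_aemeasurable hΘm hSm]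
    rfl
  rw [hmap, hΘ, Measure.smul_apply, Measure.restrict_apply hSm, key, smul_eq_mul,
    Real.volume_Ioo]
  have h2π : (0:ℝ) < 2 * Real.pi := by linarith
  have hinv : (ENNReal.ofReal (2 * Real.pi))⁻¹ = ENNReal.ofReal (1 / (2 * Real.pi)) := by
    rw [one_div, ← ENNReal.ofReal_inv_of_pos h2π]
  rw [hinv, ← ENNReal.ofReal_mul (by positivity)]
  rcases le_total (2 * α - Real.pi / 2 + γ) 0 with h | h
  · rw [max_eq_right h, mul_zero, ENNReal.ofReal_zero, ENNReal.ofReal_eq_zero]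
    exact mul_nonpos_of_nonneg_of_nonpos (by positivity) (by linarith)
  · rw [max_eq_left h]
    congr 1
    ring
end

section
/- Let ν > 0 and let S be a positive random variable such that νS² has the chi-square distribution with ν degrees of freedom (i.e., the Gamma(ν/2, 1/2) distribution). Then for all z > 0, P(S⁻¹ > z) = a_ν z^{-ν}(1 - b_ν z^{-2}) + Δ(z), where a_ν = (ν/2)^{ν/2}/Γ(ν/2 + 1), b_ν = (ν/2)²/(ν/2 + 1), and 0 ≤ Δ(z) ≤ c_ν z^{-ν-4} for some constant c_ν > 0 depending only on ν. -/
open MeasureTheory ProbabilityTheory Real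

lemma exp_neg_le_quad (u : ℝ) (hu : 0 ≤ u) : Real.exp (-u) ≤ 1 - u + u ^ 2 / 2 := by
  have key : ∀ x : ℝ, HasDerivAt (fun y : ℝ => 1 - y + y ^ 2 / 2 - Real.exp (-y))
      (-1 + x + Real.exp (-x)) x := by
    intro x
    have h1 : HasDerivAt (fun y : ℝ => Real.exp (-y)) (-Real.exp (-x)) x := by
      simpa using (hasDerivAt_neg x).exp
    have h2 : HasDerivAt (fun y : ℝ => 1 - y + y ^ 2 / 2) (-1 + x) x := by
      have := ((hasDerivAt_id x).const_sub 1).add ((hasDerivAt_pow 2 x).div_const 2)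
      exact this.congr_deriv (by norm_num)
    exact (h2.sub h1).congr_deriv (by ring)
  have hmono : MonotoneOn (fun y : ℝ => 1 - y + y ^ 2 / 2 - Real.exp (-y)) (Set.Ici 0) := by
    apply monotoneOn_of_deriv_nonneg (convex_Ici 0)
    · exact Continuous.continuousOn (by continuity)
    · intro x hx
      exact ((key x).differentiableAt).differentiableWithinAt
    · intro x hx
      rw [(key x).deriv]
      nlinarith [Real.add_one_le_exp (-x)]
  have h0 := hmono (Set.self_mem_Ici) (Set.mem_Ici.mpr hu) hu
  norm_num at h0
  nlinarith [h0]


lemma rpow_mul_self (a : ℝ) (ha : 0 < a) {x : ℝ} (hx : 0 ≤ x) :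
    x ^ (a - 1) * x = x ^ a := by
  rcases eq_or_lt_of_le hx with h | h
  · rw [← h]; simp [Real.zero_rpow ha.ne']
  · rw [← Real.rpow_add_one h.ne']; ring_nf

lemma rpow_mul_sq (a : ℝ) (ha : 0 < a) {x : ℝ} (hx : 0 ≤ x) :
    x ^ (a - 1) * x ^ 2 = x ^ (a + 1) := by
  rcases eq_or_lt_of_le hx with h | h
  · rw [← h]; simp [Real.zero_rpow (show a + 1 ≠ 0 by positivity)]
  · rw [← Real.rpow_natCast x 2, ← Real.rpow_add h]; ring_nf

lemma est (a t : ℝ) (ha : 0 < a) (ht : 0 < t) :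
    t ^ a / a - t ^ (a + 1) / (2 * (a + 1)) ≤
      (∫ x in (0:ℝ)..t, x ^ (a - 1) * Real.exp (-(x / 2))) ∧
    (∫ x in (0:ℝ)..t, x ^ (a - 1) * Real.exp (-(x / 2))) ≤
      t ^ a / a - t ^ (a + 1) / (2 * (a + 1)) + t ^ (a + 2) / (8 * (a + 2)) := by
  have h1 : (-1:ℝ) < a - 1 := by linarith
  have i1 : IntervalIntegrable (fun x : ℝ => x ^ (a - 1)) volume 0 t :=
    intervalIntegral.intervalIntegrable_rpow' h1
  have i2 : IntervalIntegrable (fun x : ℝ => x ^ a) volume 0 t :=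
    intervalIntegral.intervalIntegrable_rpow' (by linarith)
  have i3 : IntervalIntegrable (fun x : ℝ => x ^ (a + 1)) volume 0 t :=
    intervalIntegral.intervalIntegrable_rpow' (by linarith)
  have ig : IntervalIntegrable (fun x : ℝ => x ^ (a - 1) * Real.exp (-(x / 2))) volume 0 t :=
    i1.mul_continuousOn (Continuous.continuousOn (by continuity))
  have e1 : (∫ x in (0:ℝ)..t, x ^ (a - 1)) = t ^ a / a := by
    rw [integral_rpow (Or.inl h1)]
    rw [Real.zero_rpow (by linarith : a - 1 + 1 ≠ 0)]
    ring_nf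
  have e2 : (∫ x in (0:ℝ)..t, x ^ a) = t ^ (a + 1) / (a + 1) := by
    rw [integral_rpow (Or.inl (by linarith))]
    rw [Real.zero_rpow (by linarith : a + 1 ≠ 0)]
    ring_nf
  have e3 : (∫ x in (0:ℝ)..t, x ^ (a + 1)) = t ^ (a + 2) / (a + 2) := by
    rw [integral_rpow (Or.inl (by linarith))]
    rw [Real.zero_rpow (by linarith : a + 1 + 1 ≠ 0)]
    ring_nf
  constructor
  · have hle : ∀ x ∈ Set.Icc (0:ℝ) t,
        x ^ (a - 1) - (1/2) * x ^ a ≤ x ^ (a - 1) * Real.exp (-(x / 2)) := by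
      intro x hx
      have hx0 : 0 ≤ x := hx.1
      have hexp : 1 - x / 2 ≤ Real.exp (-(x / 2)) := by
        have := Real.add_one_le_exp (-(x / 2)); linarith
      have hp : (0:ℝ) ≤ x ^ (a - 1) := Real.rpow_nonneg hx0 _
      have := mul_le_mul_of_nonneg_left hexp hp
      have hm := rpow_mul_self a ha hx0
      nlinarith
    have := intervalIntegral.integral_mono_on ht.le (i1.sub (i2.const_mul (1/2))) ig hle
    rw [intervalIntegral.integral_sub i1 (i2.const_mul (1/2)),
      intervalIntegral.integral_const_mul, e1, e2] at this
    have hA : (a:ℝ) + 1 ≠ 0 := by positivity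
    have h2 : t ^ a / a - t ^ (a + 1) / (2 * (a + 1)) =
        t ^ a / a - 1 / 2 * (t ^ (a + 1) / (a + 1)) := by field_simp
    linarith
  · have hle : ∀ x ∈ Set.Icc (0:ℝ) t,
        x ^ (a - 1) * Real.exp (-(x / 2)) ≤
          x ^ (a - 1) - (1/2) * x ^ a + (1/8) * x ^ (a + 1) := by
      intro x hx
      have hx0 : 0 ≤ x := hx.1
      have hexp : Real.exp (-(x / 2)) ≤ 1 - x / 2 + (x / 2) ^ 2 / 2 :=
        exp_neg_le_quad (x / 2) (by linarith)
      have hp : (0:ℝ) ≤ x ^ (a - 1) := Real.rpow_nonneg hx0 _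
      have := mul_le_mul_of_nonneg_left hexp hp
      have hm := rpow_mul_self a ha hx0
      have hm2 := rpow_mul_sq a ha hx0
      nlinarith
    have := intervalIntegral.integral_mono_on ht.le ig
      ((i1.sub (i2.const_mul (1/2))).add (i3.const_mul (1/8))) hle
    rw [intervalIntegral.integral_add (i1.sub (i2.const_mul (1/2))) (i3.const_mul (1/8)),
      intervalIntegral.integral_sub i1 (i2.const_mul (1/2)),
      intervalIntegral.integral_const_mul, intervalIntegral.integral_const_mul,
      e1, e2, e3] at this
    have hA : (a:ℝ) + 1 ≠ 0 := by positivity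
    have hB : (a:ℝ) + 2 ≠ 0 := by positivity
    have h2 : t ^ a / a - 1 / 2 * (t ^ (a + 1) / (a + 1)) + 1 / 8 * (t ^ (a + 2) / (a + 2)) =
        t ^ a / a - t ^ (a + 1) / (2 * (a + 1)) + t ^ (a + 2) / (8 * (a + 2)) := by
      field_simp
    linarith

section
lemma exp_neg_le_quad' : True := trivial
end


theorem chi_square_inverse_tail_expansion
    {Ω : Type*} [MeasurableSpace Ω] (P : Measure Ω) [IsProbabilityMeasure P]
    (ν : ℝ) (hν : 0 < ν)
    (S : Ω → ℝ) (hS : ∀ ω, 0 < S ω)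
    (hchi : Measure.map (fun ω => ν * S ω ^ 2) P = gammaMeasure (ν / 2) (1 / 2)) :
    ∃ c > (0 : ℝ), ∀ z > (0 : ℝ),
      0 ≤ (P {ω | (S ω)⁻¹ > z}).toReal -
          (ν / 2) ^ (ν / 2) / Real.Gamma (ν / 2 + 1) * z ^ (-ν) *
            (1 - (ν / 2) ^ 2 / (ν / 2 + 1) * z ^ (-2 : ℝ)) ∧
      (P {ω | (S ω)⁻¹ > z}).toReal -
          (ν / 2) ^ (ν / 2) / Real.Gamma (ν / 2 + 1) * z ^ (-ν) *
            (1 - (ν / 2) ^ 2 / (ν / 2 + 1) * z ^ (-2 : ℝ)) ≤ c * z ^ (-ν - 4) := by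
  have ha : 0 < ν / 2 := by positivity
  set a : ℝ := ν / 2 with ha_def
  have hGa : 0 < Real.Gamma a := Real.Gamma_pos_of_pos ha
  set K : ℝ := ((1:ℝ)/2) ^ a / Real.Gamma a with hK_def
  have hK : 0 < K := by positivity
  have hprob : IsProbabilityMeasure (gammaMeasure a (1/2)) :=
    isProbabilityMeasure_gammaMeasure ha (by norm_num)
  have hmeas : AEMeasurable (fun ω => ν * S ω ^ 2) P := by
    by_contra h
    rw [Measure.map_of_not_aemeasurable h] at hchi
    have h1 := hprob.measure_univ
    rw [← hchi] at h1
    simp at h1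
  refine ⟨K * ν ^ (a + 2) / (8 * (a + 2)), by positivity, fun z hz => ?_⟩
  set t : ℝ := ν * z ^ (-2:ℝ) with ht_def
  have hzt : 0 < z ^ (-2:ℝ) := Real.rpow_pos_of_pos hz _
  have ht : 0 < t := by positivity
  -- identify the probability with a gamma integral
  have hzr : z ^ (-2:ℝ) = (z⁻¹) ^ 2 := by
    rw [show (-2:ℝ) = -((2:ℕ):ℝ) by norm_num, Real.rpow_neg hz.le, Real.rpow_natCast, inv_pow]
  have hset : {ω | (S ω)⁻¹ > z} = (fun ω => ν * S ω ^ 2) ⁻¹' (Set.Iio t) := by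
    ext ω
    have hs := hS ω
    simp only [Set.mem_setOf_eq, Set.mem_preimage, Set.mem_Iio, gt_iff_lt]
    rw [ht_def, hzr, lt_inv_comm₀ hz hs, mul_lt_mul_iff_right₀ hν,
      ← pow_lt_pow_iff_left₀ hs.le (by positivity) (two_ne_zero)]
  have hPmeas : P {ω | (S ω)⁻¹ > z} = gammaMeasure a (1/2) (Set.Iio t) := by
    rw [hset, ← Measure.map_apply_of_aemeasurable hmeas measurableSet_Iio, hchi]
  have hIioIic : gammaMeasure a (1/2) (Set.Iio t) = gammaMeasure a (1/2) (Set.Iic t) := by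
    apply le_antisymm (measure_mono Set.Iio_subset_Iic_self)
    have hsing : gammaMeasure a (1/2) {t} = 0 := by
      rw [gammaMeasure, withDensity_apply _ (measurableSet_singleton t), lintegral_singleton]
      simp
    calc gammaMeasure a (1/2) (Set.Iic t) ≤
        gammaMeasure a (1/2) (Set.Iio t) + gammaMeasure a (1/2) {t} := by
          rw [← Set.Iio_union_right]; exact measure_union_le _ _
      _ = gammaMeasure a (1/2) (Set.Iio t) := by rw [hsing, add_zero]
  have hcdf : (P {ω | (S ω)⁻¹ > z}).toReal = ∫ x in Set.Iic t, gammaPDFReal a (1/2) x := by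
    rw [hPmeas, hIioIic, ← cdf_gammaMeasure_eq_integral ha (by norm_num), cdf_eq_real,
      measureReal_def]
  -- reduce to an interval integral
  have hzero : ∀ᵐ (x : ℝ) ∂(volume.restrict (Set.Iic 0)), gammaPDFReal a (1/2) x = 0 := by
    have hne : ∀ᵐ (x : ℝ) ∂(volume.restrict (Set.Iic 0)), x ≠ 0 := by
      refine ae_restrict_of_ae ?_
      rw [ae_iff]
      simp
    rw [ae_restrict_iff' measurableSet_Iic] at hne ⊢
    filter_upwards [hne] with x hx hx0
    have : x < 0 := lt_of_le_of_ne hx0 (hx hx0)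
    rw [gammaPDFReal, if_neg (not_le.mpr this)]
  have hint0 : ∫ x in Set.Iic 0, gammaPDFReal a (1/2) x = 0 := by
    rw [integral_congr_ae hzero, integral_zero]
  have hII : IntervalIntegrable (gammaPDFReal a (1/2)) volume 0 t := by
    have hform : IntervalIntegrable
        (fun x : ℝ => (1/2:ℝ) ^ a / Real.Gamma a * x ^ (a-1) * Real.exp (-(1/2 * x)))
        volume 0 t := by
      have := ((intervalIntegral.intervalIntegrable_rpow' (show (-1:ℝ) < a - 1 by linarith)
        (a := 0) (b := t)).const_mul ((1/2:ℝ) ^ a / Real.Gamma a)).mul_continuousOn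
        (Continuous.continuousOn (by continuity) :
          ContinuousOn (fun x : ℝ => Real.exp (-(1/2 * x))) (Set.uIcc 0 t))
      simpa [mul_assoc] using this
    rw [intervalIntegrable_iff_integrableOn_Ioc_of_le ht.le] at hform ⊢
    apply hform.congr_fun ?_ measurableSet_Ioc
    intro x hx
    rw [gammaPDFReal, if_pos hx.1.le]
  have hsplit : ∫ x in Set.Iic t, gammaPDFReal a (1/2) x
      = ∫ x in (0:ℝ)..t, gammaPDFReal a (1/2) x := by
    have hIOc : IntegrableOn (gammaPDFReal a (1/2)) (Set.Ioc 0 t) volume := by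
      rwa [intervalIntegrable_iff_integrableOn_Ioc_of_le ht.le] at hII
    have hIic0 : IntegrableOn (gammaPDFReal a (1/2)) (Set.Iic 0) volume :=
      (integrable_congr hzero).mpr (integrable_zero _ _ _)
    rw [← Set.Iic_union_Ioc_eq_Iic ht.le,
      setIntegral_union (Set.Iic_disjoint_Ioc le_rfl) measurableSet_Ioc hIic0 hIOc, hint0, zero_add,
      intervalIntegral.integral_of_le ht.le]
  have hpull : ∫ x in (0:ℝ)..t, gammaPDFReal a (1/2) x
      = K * ∫ x in (0:ℝ)..t, x ^ (a - 1) * Real.exp (-(x / 2)) := by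
    rw [← intervalIntegral.integral_const_mul]
    apply intervalIntegral.integral_congr
    intro x hx
    rw [Set.uIcc_of_le ht.le] at hx
    rw [gammaPDFReal, if_pos hx.1]
    have harg : -((1:ℝ)/2 * x) = -(x / 2) := by ring
    rw [harg, hK_def]
    ring
  have hE := est a t ha ht
  -- algebra: identify main and error terms
  have hpow : ∀ b : ℝ, t ^ b = ν ^ b * z ^ ((-2) * b) := by
    intro b
    rw [ht_def, Real.mul_rpow hν.le hzt.le, ← Real.rpow_mul hz.le]
  have hXa : t ^ a = ν ^ a * z ^ (-ν) := by
    rw [hpow a, show (-2) * a = -ν by rw [ha_def]; ring]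
  have hXa1 : t ^ (a + 1) = ν ^ (a + 1) * (z ^ (-ν) * z ^ (-2:ℝ)) := by
    rw [hpow (a+1), ← Real.rpow_add hz, show (-2) * (a+1) = -ν + -2 by rw [ha_def]; ring]
  have hXa2 : t ^ (a + 2) = ν ^ (a + 2) * z ^ (-ν - 4) := by
    rw [hpow (a+2), show (-2) * (a+2) = -ν - 4 by rw [ha_def]; ring]
  have hν2 : ν = 2 * a := by rw [ha_def]; ring
  have hh : ((1:ℝ)/2) ^ a * ν ^ a = a ^ a := by
    rw [← Real.mul_rpow (by norm_num) hν.le, show (1:ℝ)/2 * ν = a by rw [ha_def]; ring]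
  have hA1 : (a:ℝ) + 1 ≠ 0 := by positivity
  have hmain : K * (t ^ a / a - t ^ (a + 1) / (2 * (a + 1))) =
      a ^ a / Real.Gamma (a + 1) * z ^ (-ν) * (1 - a ^ 2 / (a + 1) * z ^ (-2:ℝ)) := by
    calc K * (t ^ a / a - t ^ (a + 1) / (2 * (a + 1)))
        = (((1:ℝ)/2) ^ a * ν ^ a) / Real.Gamma a *
            (z ^ (-ν) / a - ν * (z ^ (-ν) * z ^ (-2:ℝ)) / (2 * (a + 1))) := by
          rw [hXa, hXa1, Real.rpow_add_one hν.ne', hK_def]; ring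
      _ = a ^ a / Real.Gamma a *
            (z ^ (-ν) / a - 2 * a * (z ^ (-ν) * z ^ (-2:ℝ)) / (2 * (a + 1))) := by
          rw [hh, ← hν2]
      _ = a ^ a / Real.Gamma (a + 1) * z ^ (-ν) * (1 - a ^ 2 / (a + 1) * z ^ (-2:ℝ)) := by
          rw [Real.Gamma_add_one ha.ne']
          field_simp
  have herr : K * (t ^ (a + 2) / (8 * (a + 2))) =
      K * ν ^ (a + 2) / (8 * (a + 2)) * z ^ (-ν - 4) := by
    rw [hXa2]; ring
  have hPI : (P {ω | (S ω)⁻¹ > z}).toReal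
      = K * ∫ x in (0:ℝ)..t, x ^ (a - 1) * Real.exp (-(x / 2)) :=
    hcdf.trans (hsplit.trans hpull)
  have hlow := mul_le_mul_of_nonneg_left hE.1 hK.le
  have hupp := mul_le_mul_of_nonneg_left hE.2 hK.le
  rw [mul_add] at hupp
  constructor
  · rw [hPI, ← hmain]; linarith
  · rw [hPI, ← hmain]; linarith [herr, hupp]
end

section
/- Let ν > 0, let S be positive with νS² chi-square with ν degrees of freedom, and let Z be standard normal independent of S. Then as x → ∞, P(S⁻¹ Z > x) = a_ν x^{-ν} ( E[Z₊^ν] - b_ν x^{-2} E[Z₊^{ν+2}] + O(x^{-4}) ), where Z₊ = max(Z,0), a_ν = (ν/2)^{ν/2}/Γ(ν/2+1), b_ν = (ν/2)²/(ν/2+1). -/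
open MeasureTheory ProbabilityTheory Real Filter Asymptotics Set intervalIntegral
open scoped ENNReal NNReal

lemma exp_bound {u : ℝ} (hu : 0 ≤ u) : |Real.exp (-u) - (1 - u)| ≤ u ^ 2 := by
  have h1 : 1 - u ≤ Real.exp (-u) := by linarith [Real.add_one_le_exp (-u)]
  have h2 : Real.exp (-u) ≤ 1 - u + u ^ 2 := by
    have he : (1 + u) ≤ Real.exp u := by linarith [Real.add_one_le_exp u]
    have hinv : Real.exp (-u) * Real.exp u = 1 := by
      rw [← Real.exp_add]; simp
    nlinarith [Real.exp_pos (-u)]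
  rw [abs_le]; constructor <;> nlinarith

lemma incgamma {a c : ℝ} (ha : 0 < a) (hc : 0 ≤ c) :
    |(∫ t in (0:ℝ)..c, t ^ (a-1) * Real.exp (-(1/2 * t)))
      - (c ^ a / a - c ^ (a+1) / (2*(a+1)))| ≤ c ^ (a+2) / (4*(a+2)) := by
  have hI1 : IntervalIntegrable (fun t : ℝ => t ^ (a-1)) volume 0 c :=
    intervalIntegral.intervalIntegrable_rpow' (by linarith)
  have hI2 : IntervalIntegrable (fun t : ℝ => t ^ a) volume 0 c :=
    intervalIntegral.intervalIntegrable_rpow' (by linarith)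
  have hI3 : IntervalIntegrable (fun t : ℝ => t ^ (a+1)) volume 0 c :=
    intervalIntegral.intervalIntegrable_rpow' (by linarith)
  have hg : IntervalIntegrable (fun t : ℝ => t ^ (a-1) - t ^ a / 2) volume 0 c :=
    hI1.sub (hI2.div_const 2)
  have hmeas : AEStronglyMeasurable (fun t : ℝ => t ^ (a-1) * Real.exp (-(1/2 * t)))
      (volume.restrict (Set.uIoc (0:ℝ) c)) := by
    apply Measurable.aestronglyMeasurable
    fun_prop
  have hf : IntervalIntegrable (fun t : ℝ => t ^ (a-1) * Real.exp (-(1/2 * t))) volume 0 c := by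
    apply hI1.mono_fun hmeas
    filter_upwards [ae_restrict_mem measurableSet_uIoc] with t ht
    rw [Set.uIoc_of_le hc] at ht
    have ht0 : 0 < t := ht.1
    have : Real.exp (-(1/2 * t)) ≤ 1 := by
      have := Real.exp_le_exp.mpr (show -(1/2 * t) ≤ 0 by linarith)
      simpa using this
    rw [Real.norm_eq_abs, Real.norm_eq_abs, abs_of_nonneg (by positivity),
      abs_of_nonneg (Real.rpow_nonneg ht0.le _)]
    nlinarith [Real.rpow_nonneg ht0.le (a-1), Real.exp_pos (-(1/2*t))]
  -- value of ∫ g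
  have hrint : ∀ r : ℝ, -1 < r → (∫ t in (0:ℝ)..c, t ^ r) = c ^ (r+1) / (r+1) := by
    intro r hr
    rw [integral_rpow (Or.inl hr)]
    rw [Real.zero_rpow (by linarith)]
    ring
  have hgval : (∫ t in (0:ℝ)..c, (t ^ (a-1) - t ^ a / 2))
      = c ^ a / a - c ^ (a+1) / (2*(a+1)) := by
    rw [intervalIntegral.integral_sub hI1 (hI2.div_const 2),
      intervalIntegral.integral_div, hrint (a-1) (by linarith), hrint a (by linarith)]
    have h0 : a ≠ 0 := ha.ne'
    have h1 : a + 1 ≠ 0 := by positivity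
    rw [sub_add_cancel]
    field_simp
  rw [← hgval, ← intervalIntegral.integral_sub hf hg]
  have key : ∀ᵐ t ∂volume.restrict (Set.uIoc (0:ℝ) c),
      ‖t ^ (a-1) * Real.exp (-(1/2 * t)) - (t ^ (a-1) - t ^ a / 2)‖ ≤ t ^ (a+1) / 4 := by
    filter_upwards [ae_restrict_mem measurableSet_uIoc] with t ht
    rw [Set.uIoc_of_le hc] at ht
    have ht0 : 0 < t := ht.1
    have hsplit : t ^ (a-1) * Real.exp (-(1/2 * t)) - (t ^ (a-1) - t ^ a / 2)
        = t ^ (a-1) * (Real.exp (-(1/2 * t)) - (1 - 1/2 * t)) := by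
      have : t ^ (a-1) * t = t ^ a := by
        rw [← Real.rpow_add_one ht0.ne' (a-1)]; ring_nf
      linear_combination (-1/2 : ℝ) * this
    rw [hsplit, Real.norm_eq_abs, abs_mul, abs_of_nonneg (Real.rpow_nonneg ht0.le _)]
    have hb := exp_bound (u := 1/2 * t) (by linarith)
    have h2 : t ^ (a-1) * |Real.exp (-(1/2 * t)) - (1 - 1/2*t)| ≤ t ^ (a-1) * ((1/2*t)^2) :=
      mul_le_mul_of_nonneg_left hb (Real.rpow_nonneg ht0.le _)
    refine h2.trans ?_
    have : t ^ (a-1) * t ^ (2:ℝ) = t ^ (a+1) := by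
      rw [← Real.rpow_add ht0]; ring_nf
    have e : t ^ (a-1) * (1/2*t)^2 = t ^ (a+1)/4 := by
      rw [← this, Real.rpow_two]; ring
    exact le_of_eq e
  have := intervalIntegral.norm_integral_le_abs_of_norm_le key (hI3.div_const 4)
  rw [Real.norm_eq_abs] at this
  refine this.trans ?_
  rw [intervalIntegral.integral_div, hrint (a+1) (by linarith)]
  rw [abs_of_nonneg (by positivity), show a+1+1 = a+2 by ring, div_div, mul_comm]

lemma cdf_est {ν y : ℝ} (hν : 0 < ν) (hy : 0 < y) :
    |(gammaMeasure (ν/2) (1/2) (Iio (ν * y^2))).toReal -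
      ((ν/2) ^ (ν/2) / Real.Gamma (ν/2+1) * y ^ ν -
       (ν/2) ^ (ν/2) / Real.Gamma (ν/2+1) * ((ν/2)^2/(ν/2+1)) * y ^ (ν+2))|
    ≤ (1/2 : ℝ) ^ (ν/2) / Real.Gamma (ν/2) * (ν ^ (ν/2+2) / (4*(ν/2+2))) * y ^ (ν+4) := by
  have ha : 0 < ν/2 := by linarith
  have hΓ : 0 < Real.Gamma (ν/2) := Real.Gamma_pos_of_pos ha
  have hc : 0 < ν * y^2 := by positivity
  set K : ℝ := (1/2 : ℝ) ^ (ν/2) / Real.Gamma (ν/2) with hK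
  have hKpos : 0 < K := by
    rw [hK]; positivity
  set c : ℝ := ν * y^2 with hcdef
  -- Step 1: express the measure as an interval integral
  have hm : (gammaMeasure (ν/2) (1/2) (Iio c)).toReal
      = K * ∫ t in (0:ℝ)..c, t ^ (ν/2-1) * Real.exp (-(1/2*t)) := by
    rw [gammaMeasure, withDensity_apply _ measurableSet_Iio]
    have h1 : ∫⁻ t in Iio c, gammaPDF (ν/2) (1/2) t
        = ∫⁻ t in Ioc 0 c, gammaPDF (ν/2) (1/2) t := by
      rw [← Iic_union_Ioo_eq_Iio hc, lintegral_union measurableSet_Ioo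
        (by simp [Set.disjoint_iff_forall_ne, Set.mem_Iic, Set.mem_Ioo]; intros; linarith)]
      rw [setLIntegral_congr (Iio_ae_eq_Iic (a := (0:ℝ))).symm,
        lintegral_gammaPDF_of_nonpos le_rfl, zero_add]
      exact setLIntegral_congr Ioo_ae_eq_Ioc
    have h2 : ∫ t in Set.Ioc (0:ℝ) c, gammaPDFReal (ν/2) (1/2) t
        = (∫⁻ t in Set.Ioc (0:ℝ) c, gammaPDF (ν/2) (1/2) t).toReal := by
      rw [integral_eq_lintegral_of_nonneg_ae
        (ae_of_all _ fun x => gammaPDFReal_nonneg ha one_half_pos x)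
        ((measurable_gammaPDFReal _ _).aestronglyMeasurable.restrict)]
      rfl
    rw [h1, ← h2]
    have h3 : ∫ t in Set.Ioc (0:ℝ) c, gammaPDFReal (ν/2) (1/2) t
        = ∫ t in Set.Ioc (0:ℝ) c, K * (t ^ (ν/2-1) * Real.exp (-(1/2*t))) := by
      refine setIntegral_congr_fun measurableSet_Ioc fun t ht => ?_
      rw [gammaPDFReal, if_pos ht.1.le, hK]
      ring
    rw [h3, MeasureTheory.integral_const_mul K _, intervalIntegral.integral_of_le hc.le]
  rw [hm]
  have key := incgamma (a := ν/2) (c := c) ha hc.le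
  -- rpow algebra
  have hrw : ∀ q : ℝ, c ^ q = ν ^ q * y ^ (2*q) := by
    intro q
    rw [hcdef, Real.mul_rpow hν.le (sq_nonneg y), ← Real.rpow_two,
      ← Real.rpow_mul hy.le]
  have hΓ1 : Real.Gamma (ν/2+1) = (ν/2) * Real.Gamma (ν/2) := Real.Gamma_add_one ha.ne'
  have hhalf : (1/2 : ℝ) ^ (ν/2) * ν ^ (ν/2) = (ν/2) ^ (ν/2) := by
    rw [← Real.mul_rpow (by norm_num) hν.le, show (1/2:ℝ)*ν = ν/2 by ring]
  have e1 : K * (c ^ (ν/2) / (ν/2)) = (ν/2) ^ (ν/2) / Real.Gamma (ν/2+1) * y ^ ν := by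
    rw [hrw, show 2*(ν/2) = ν by ring, hΓ1, hK, ← hhalf]
    field_simp
  have e2 : K * (c ^ (ν/2+1) / (2*(ν/2+1)))
      = (ν/2) ^ (ν/2) / Real.Gamma (ν/2+1) * ((ν/2)^2/(ν/2+1)) * y ^ (ν+2) := by
    rw [hrw, show 2*(ν/2+1) = ν+2 by ring, hΓ1, hK]
    rw [show ν ^ (ν/2+1) = ν ^ (ν/2) * ν by
      rw [Real.rpow_add hν, Real.rpow_one], ← hhalf]
    have h1 : ν/2 + 1 ≠ 0 := by positivity
    field_simp
  have e3 : K * (c ^ (ν/2+2) / (4*(ν/2+2)))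
      = K * (ν ^ (ν/2+2) / (4*(ν/2+2))) * y ^ (ν+4) := by
    rw [hrw, show 2*(ν/2+2) = ν+4 by ring]
    ring
  calc |K * (∫ t in (0:ℝ)..c, t ^ (ν/2-1) * Real.exp (-(1/2*t))) -
      ((ν/2) ^ (ν/2) / Real.Gamma (ν/2+1) * y ^ ν -
       (ν/2) ^ (ν/2) / Real.Gamma (ν/2+1) * ((ν/2)^2/(ν/2+1)) * y ^ (ν+2))|
      = K * |(∫ t in (0:ℝ)..c, t ^ (ν/2-1) * Real.exp (-(1/2*t)))
          - (c ^ (ν/2) / (ν/2) - c ^ (ν/2+1) / (2*(ν/2+1)))| := by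
        rw [← e1, ← e2, ← mul_sub, ← mul_sub, abs_mul, abs_of_pos hKpos]
    _ ≤ K * (c ^ (ν/2+2) / (4*(ν/2+2))) := by
        exact mul_le_mul_of_nonneg_left key hKpos.le
    _ = K * (ν ^ (ν/2+2) / (4*(ν/2+2))) * y ^ (ν+4) := e3

lemma gauss_moment {p : ℝ} (hp : 0 < p) :
    Integrable (fun z : ℝ => max z 0 ^ p) (gaussianReal 0 1) := by
  have hbase : Integrable (fun z : ℝ => max z 0 ^ p * Real.exp (-(1/2) * z^2)) volume := by
    rw [← integrableOn_univ, ← Set.Iio_union_Ici (a := (0:ℝ)), integrableOn_union]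
    constructor
    · refine (integrableOn_zero (ε' := ℝ)).congr_fun (fun z hz => ?_) measurableSet_Iio
      rw [max_eq_right (le_of_lt hz), Real.zero_rpow hp.ne']
      simp
    · rw [integrableOn_Ici_iff_integrableOn_Ioi]
      refine (integrableOn_rpow_mul_exp_neg_mul_sq (by norm_num : (0:ℝ) < 1/2)
        (by linarith : (-1:ℝ) < p)).congr_fun (fun z hz => ?_) measurableSet_Ioi
      rw [max_eq_left (le_of_lt hz)]
  have hrw : gaussianReal 0 1 = volume.withDensity (gaussianPDF 0 1) :=
    gaussianReal_of_var_ne_zero 0 one_ne_zero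
  rw [hrw, integrable_withDensity_iff (measurable_gaussianPDF 0 1)
    (ae_of_all _ fun x => ENNReal.ofReal_lt_top)]
  have heq : ∀ z : ℝ, max z 0 ^ p * (gaussianPDF 0 1 z).toReal
      = (Real.sqrt (2 * Real.pi))⁻¹ * (max z 0 ^ p * Real.exp (-(1/2) * z^2)) := by
    intro z
    rw [gaussianPDF, ENNReal.toReal_ofReal (gaussianPDFReal_nonneg 0 1 z), gaussianPDFReal]
    push_cast
    rw [mul_one, show -(z - 0)^2/(2*1) = -(1/2) * z^2 by ring]
    ring
  exact (hbase.const_mul _).congr (ae_of_all _ fun z => (heq z).symm)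

theorem t_tail_expansion
    {Ω : Type*} [MeasurableSpace Ω] (P : Measure Ω) [IsProbabilityMeasure P]
    (ν : ℝ) (hν : 0 < ν)
    (S Z : Ω → ℝ) (hS : ∀ ω, 0 < S ω)
    (hchi : Measure.map (fun ω => ν * S ω ^ 2) P = gammaMeasure (ν / 2) (1 / 2))
    (hZ : Measure.map Z P = gaussianReal 0 1)
    (hindep : IndepFun S Z P) :
    (fun x : ℝ =>
        (P {ω | (S ω)⁻¹ * Z ω > x}).toReal -
          (ν / 2) ^ (ν / 2) / Real.Gamma (ν / 2 + 1) * x ^ (-ν) *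
            ((∫ ω, max (Z ω) 0 ^ ν ∂P) -
              (ν / 2) ^ 2 / (ν / 2 + 1) * x ^ (-2 : ℝ) *
                ∫ ω, max (Z ω) 0 ^ (ν + 2) ∂P))
      =O[Filter.atTop] (fun x : ℝ => x ^ (-ν - 4)) := by
  have ha : 0 < ν / 2 := by linarith
  -- measurability
  have hchiA : AEMeasurable (fun ω => ν * S ω ^ 2) P := by
    by_contra h
    rw [Measure.map_of_not_aemeasurable h] at hchi
    have : IsProbabilityMeasure (gammaMeasure (ν/2) (1/2)) :=
      isProbabilityMeasure_gammaMeasure ha one_half_pos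
    exact (IsProbabilityMeasure.ne_zero _) hchi.symm
  have hSm : AEMeasurable S P := by
    have h1 : AEMeasurable (fun ω => Real.sqrt ((ν * S ω ^ 2) / ν)) P :=
      Real.continuous_sqrt.measurable.comp_aemeasurable (hchiA.div_const ν)
    refine h1.congr (ae_of_all _ fun ω => ?_)
    simp only [mul_div_cancel_left₀ _ hν.ne', Real.sqrt_sq (hS ω).le]
  have hZm : AEMeasurable Z P := by
    by_contra h
    rw [Measure.map_of_not_aemeasurable h] at hZ
    exact (IsProbabilityMeasure.ne_zero _) hZ.symm
  -- constants
  set A : ℝ := (ν/2) ^ (ν/2) / Real.Gamma (ν/2+1) with hA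
  set B : ℝ := (ν/2)^2 / (ν/2+1) with hB
  set C₀ : ℝ := (1/2 : ℝ) ^ (ν/2) / Real.Gamma (ν/2) * (ν ^ (ν/2+2) / (4*(ν/2+2))) with hC₀
  have hC₀pos : 0 < C₀ := by
    rw [hC₀]
    have := Real.Gamma_pos_of_pos ha
    positivity
  -- CDF of S
  have hSgamma : ∀ y : ℝ, 0 < y →
      P {ω | S ω < y} = gammaMeasure (ν/2) (1/2) (Iio (ν * y^2)) := by
    intro y hy
    have hset : {ω | S ω < y} = (fun ω => ν * S ω ^ 2) ⁻¹' (Iio (ν * y^2)) := by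
      ext ω
      simp only [mem_setOf_eq, mem_preimage, mem_Iio]
      constructor
      · intro h
        have h1 : 0 < y + S ω := by linarith [hS ω]
        nlinarith [mul_pos hν (mul_pos (sub_pos.mpr h) h1)]
      · intro h
        by_contra hc
        push_neg at hc
        nlinarith [mul_nonneg (mul_nonneg hν.le (sub_nonneg.mpr hc))
          (le_of_lt (show 0 < S ω + y by linarith [hS ω]))]
    rw [hset, ← hchi, Measure.map_apply_of_aemeasurable hchiA measurableSet_Iio]
  -- pointwise CDF estimate
  have L1 : ∀ y : ℝ,
      |(P {ω | S ω < y}).toReal - (A * max y 0 ^ ν - A * B * max y 0 ^ (ν+2))|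
        ≤ C₀ * max y 0 ^ (ν+4) := by
    intro y
    rcases le_or_gt y 0 with hy | hy
    · have hempty : {ω | S ω < y} = (∅ : Set Ω) := by
        ext ω; simp only [mem_setOf_eq, mem_empty_iff_false, iff_false, not_lt]
        exact hy.trans (hS ω).le
      rw [hempty, measure_empty, max_eq_right hy, Real.zero_rpow hν.ne',
        Real.zero_rpow (by linarith : ν + 2 ≠ 0), Real.zero_rpow (by linarith : ν + 4 ≠ 0)]
      simp
    · rw [max_eq_left hy.le, hSgamma y hy]
      exact cdf_est hν hy
  -- monotonicity of CDF → measurability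
  have Fmono : Monotone (fun y => (P {ω | S ω < y}).toReal) := by
    intro y₁ y₂ h12
    exact ENNReal.toReal_mono (measure_ne_top P _)
      (measure_mono fun ω (hω : S ω < y₁) => lt_of_lt_of_le hω h12)
  have Fmeas : Measurable (fun y => (P {ω | S ω < y}).toReal) := Fmono.measurable
  -- product representation
  haveI : IsProbabilityMeasure (Measure.map Z P) := Measure.isProbabilityMeasure_map hZm
  haveI : IsProbabilityMeasure (Measure.map S P) := Measure.isProbabilityMeasure_map hSm
  have hprod : Measure.map (fun ω => (Z ω, S ω)) P
      = (Measure.map Z P).prod (Measure.map S P) :=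
    (indepFun_iff_map_prod_eq_prod_map_map hZm hSm).mp hindep.symm
  have hrep : ∀ x : ℝ, 0 < x →
      (P {ω | (S ω)⁻¹ * Z ω > x}).toReal
        = ∫ z, (P {ω | S ω < z / x}).toReal ∂(gaussianReal 0 1) := by
    intro x hx
    have hT : MeasurableSet {p : ℝ × ℝ | x * p.2 < p.1} :=
      measurableSet_lt (measurable_snd.const_mul x) measurable_fst
    have hset : {ω | (S ω)⁻¹ * Z ω > x}
        = (fun ω => (Z ω, S ω)) ⁻¹' {p : ℝ × ℝ | x * p.2 < p.1} := by
      ext ω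
      simp only [mem_setOf_eq, mem_preimage, gt_iff_lt]
      rw [inv_mul_eq_div, lt_div_iff₀ (hS ω)]
    rw [hset, ← Measure.map_apply_of_aemeasurable (hZm.prodMk hSm) hT, hprod, hZ,
      Measure.prod_apply hT]
    have hsec : ∀ z : ℝ, (Prod.mk z ⁻¹' {p : ℝ × ℝ | x * p.2 < p.1}) = Iio (z / x) := by
      intro z
      ext s
      simp only [mem_preimage, mem_setOf_eq, mem_Iio]
      rw [lt_div_iff₀ hx, mul_comm]
    have hsec2 : ∀ z : ℝ, Measure.map S P (Iio (z / x)) = P {ω | S ω < z / x} := by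
      intro z
      rw [Measure.map_apply_of_aemeasurable hSm measurableSet_Iio]
      rfl
    simp_rw [hsec, hsec2]
    rw [← integral_toReal]
    · refine Measurable.aemeasurable ?_
      have heq : (fun z : ℝ => P {ω | S ω < z / x})
          = fun z => ENNReal.ofReal ((P {ω | S ω < z / x}).toReal) := by
        funext z; rw [ENNReal.ofReal_toReal (measure_ne_top P _)]
      rw [heq]
      exact (Fmeas.comp (measurable_id.div_const x)).ennreal_ofReal
    · exact ae_of_all _ fun z => measure_lt_top P _
  -- moments
  have hmaxm : ∀ p : ℝ, 0 ≤ p → Measurable (fun z : ℝ => max z 0 ^ p) := fun p hp =>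
    ((Real.continuous_rpow_const hp).comp (continuous_id.max continuous_const)).measurable
  have hmom : ∀ p : ℝ, 0 ≤ p →
      ∫ ω, max (Z ω) 0 ^ p ∂P = ∫ z, max z 0 ^ p ∂(gaussianReal 0 1) := by
    intro p hp
    have h1 : ∫ z, max z 0 ^ p ∂(Measure.map Z P) = ∫ ω, max (Z ω) 0 ^ p ∂P :=
      integral_map hZm (hmaxm p hp).aestronglyMeasurable
    rw [hZ] at h1
    exact h1.symm
  set M4 : ℝ := ∫ z, max z 0 ^ (ν+4) ∂(gaussianReal 0 1) with hM4def
  have hM4 : 0 ≤ M4 :=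
    integral_nonneg fun z => Real.rpow_nonneg (le_max_right z 0) _
  rw [isBigO_iff]
  refine ⟨C₀ * M4, ?_⟩
  filter_upwards [eventually_ge_atTop (1:ℝ)] with x hx1
  have hx : 0 < x := lt_of_lt_of_le one_pos hx1
  have hxν : (0:ℝ) < x ^ ν := Real.rpow_pos_of_pos hx ν
  have hx2 : (0:ℝ) < x ^ (2:ℝ) := Real.rpow_pos_of_pos hx 2
  have hx4 : (0:ℝ) < x ^ (ν+4) := Real.rpow_pos_of_pos hx _
  -- pointwise estimate for sections
  have L2 : ∀ z : ℝ,
      |(P {ω | S ω < z / x}).toReal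
        - (A * (max z 0 ^ ν / x ^ ν) - A * B * (max z 0 ^ (ν+2) / x ^ (ν+2)))|
      ≤ C₀ * (max z 0 ^ (ν+4) / x ^ (ν+4)) := by
    intro z
    have h1 := L1 (z / x)
    have hmax : max (z / x) 0 = max z 0 / x := by
      have h2 : max (z/x) (0/x) = max z 0 / x := max_div_div_right hx.le z 0
      rwa [zero_div] at h2
    rw [hmax, Real.div_rpow (le_max_right z 0) hx.le,
      Real.div_rpow (le_max_right z 0) hx.le,
      Real.div_rpow (le_max_right z 0) hx.le] at h1
    exact h1
  -- integrability
  have hi1 : Integrable (fun z : ℝ => max z 0 ^ ν) (gaussianReal 0 1) := gauss_moment hν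
  have hi2 : Integrable (fun z : ℝ => max z 0 ^ (ν+2)) (gaussianReal 0 1) :=
    gauss_moment (by linarith)
  have hi3 : Integrable (fun z : ℝ => max z 0 ^ (ν+4)) (gaussianReal 0 1) :=
    gauss_moment (by linarith)
  have hIφ : Integrable (fun z : ℝ => (P {ω | S ω < z / x}).toReal) (gaussianReal 0 1) := by
    refine (integrable_const (1:ℝ)).mono'
      ((Fmeas.comp (measurable_id.div_const x)).aestronglyMeasurable) (ae_of_all _ fun z => ?_)
    rw [Real.norm_eq_abs, abs_of_nonneg ENNReal.toReal_nonneg]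
    have h2 : P {ω | S ω < z / x} ≤ 1 := prob_le_one
    have h3 := ENNReal.toReal_mono (by simp : (1:ℝ≥0∞) ≠ ⊤) h2
    simpa using h3
  have hIg : Integrable (fun z : ℝ =>
      A * (max z 0 ^ ν / x ^ ν) - A * B * (max z 0 ^ (ν+2) / x ^ (ν+2)))
      (gaussianReal 0 1) :=
    ((hi1.div_const _).const_mul A).sub ((hi2.div_const _).const_mul (A*B))
  have hbnd : Integrable (fun z : ℝ => C₀ * (max z 0 ^ (ν+4) / x ^ (ν+4)))
      (gaussianReal 0 1) := (hi3.div_const _).const_mul C₀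
  -- integral estimate
  have hint : |(∫ z, (P {ω | S ω < z / x}).toReal ∂(gaussianReal 0 1))
      - ∫ z, (A * (max z 0 ^ ν / x ^ ν) - A * B * (max z 0 ^ (ν+2) / x ^ (ν+2)))
          ∂(gaussianReal 0 1)|
      ≤ C₀ * (M4 / x ^ (ν+4)) := by
    rw [← integral_sub hIφ hIg]
    calc |∫ z, ((P {ω | S ω < z / x}).toReal
          - (A * (max z 0 ^ ν / x ^ ν) - A * B * (max z 0 ^ (ν+2) / x ^ (ν+2))))
            ∂(gaussianReal 0 1)|
        ≤ ∫ z, ‖(P {ω | S ω < z / x}).toReal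
          - (A * (max z 0 ^ ν / x ^ ν) - A * B * (max z 0 ^ (ν+2) / x ^ (ν+2)))‖
            ∂(gaussianReal 0 1) := by
          rw [← Real.norm_eq_abs]
          exact norm_integral_le_integral_norm _
      _ ≤ ∫ z, C₀ * (max z 0 ^ (ν+4) / x ^ (ν+4)) ∂(gaussianReal 0 1) := by
          refine integral_mono (hIφ.sub hIg).norm hbnd fun z => ?_
          rw [Real.norm_eq_abs]
          exact L2 z
      _ = C₀ * (M4 / x ^ (ν+4)) := by
          rw [MeasureTheory.integral_const_mul, MeasureTheory.integral_div]
  -- main term identity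
  have hgval : ∫ z, (A * (max z 0 ^ ν / x ^ ν) - A * B * (max z 0 ^ (ν+2) / x ^ (ν+2)))
        ∂(gaussianReal 0 1)
      = A * ((∫ z, max z 0 ^ ν ∂(gaussianReal 0 1)) / x ^ ν)
        - A * B * ((∫ z, max z 0 ^ (ν+2) ∂(gaussianReal 0 1)) / x ^ (ν+2)) := by
    rw [integral_sub ((hi1.div_const _).const_mul A) ((hi2.div_const _).const_mul (A*B)),
      MeasureTheory.integral_const_mul, MeasureTheory.integral_const_mul,
      MeasureTheory.integral_div, MeasureTheory.integral_div]
  have hmain : A * x ^ (-ν) *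
        ((∫ ω, max (Z ω) 0 ^ ν ∂P) - B * x ^ (-2:ℝ) * ∫ ω, max (Z ω) 0 ^ (ν+2) ∂P)
      = ∫ z, (A * (max z 0 ^ ν / x ^ ν) - A * B * (max z 0 ^ (ν+2) / x ^ (ν+2)))
          ∂(gaussianReal 0 1) := by
    rw [hmom ν hν.le, hmom (ν+2) (by linarith), hgval, Real.rpow_neg hx.le, Real.rpow_neg hx.le,
      show x ^ (ν+2) = x ^ ν * x ^ (2:ℝ) from Real.rpow_add hx ν 2]
    field_simp
  have hxpow : x ^ (-ν - 4) = (x ^ (ν+4))⁻¹ := by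
    rw [show -ν-4 = -(ν+4) by ring, Real.rpow_neg hx.le]
  rw [Real.norm_eq_abs, Real.norm_eq_abs, hrep x hx, hmain,
    abs_of_pos (Real.rpow_pos_of_pos hx (-ν-4))]
  calc |(∫ z, (P {ω | S ω < z / x}).toReal ∂(gaussianReal 0 1))
      - ∫ z, (A * (max z 0 ^ ν / x ^ ν) - A * B * (max z 0 ^ (ν+2) / x ^ (ν+2)))
          ∂(gaussianReal 0 1)|
      ≤ C₀ * (M4 / x ^ (ν+4)) := hint
    _ = C₀ * M4 * x ^ (-ν-4) := by rw [hxpow]; ring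
end

section
/- For ν > 0, the upper tail of the Student t-distribution with ν degrees of freedom satisfies 1 - t_ν(x) ~ a_ν E[Z₊^ν] x^{-ν} as x → ∞, where a_ν = (ν/2)^{ν/2}/Γ(ν/2+1) and E[Z₊^ν] = 2^{ν/2-1}Γ((ν+1)/2)/√π. Consequently the quantile function satisfies t_ν^{-1}(1-u) ~ (a_ν E[Z₊^ν])^{1/ν} u^{-1/ν} as u ↓ 0. -/
section auxlemmas
open MeasureTheory ProbabilityTheory Real Filter Set

lemma aux_int_rpow {a : ℝ} (ha : 0 < a) {y : ℝ} (hy : 0 < y) :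
    ∫ x in Ioo (0:ℝ) y, x ^ (a - 1) = y ^ a / a := by
  rw [← integral_Ioc_eq_integral_Ioo, ← intervalIntegral.integral_of_le hy.le,
    integral_rpow (Or.inl (by linarith))]
  rw [sub_add_cancel, Real.zero_rpow ha.ne']
  ring

lemma aux_intOn_rpow {a : ℝ} (ha : 0 < a) (y : ℝ) :
    IntegrableOn (fun x : ℝ => x ^ (a - 1)) (Ioo 0 y) :=
  ((intervalIntegral.intervalIntegrable_rpow' (by linarith)).1).mono_set Ioo_subset_Ioc_self

lemma gamma_Iio_bounds {a : ℝ} (ha : 0 < a) {y : ℝ} (hy : 0 < y) :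
    Real.exp (-(y / 2)) * ((1/2 : ℝ) ^ a / Real.Gamma (a + 1) * y ^ a)
      ≤ ((gammaMeasure a (1/2)) (Iio y)).toReal ∧
    ((gammaMeasure a (1/2)) (Iio y)).toReal ≤ (1/2 : ℝ) ^ a / Real.Gamma (a + 1) * y ^ a := by
  have hΓ : 0 < Real.Gamma a := Real.Gamma_pos_of_pos ha
  set C : ℝ := (1/2 : ℝ) ^ a / Real.Gamma a with hCdef
  have hC : 0 < C := by positivity
  have hsimp : (1/2 : ℝ) ^ a / Real.Gamma (a + 1) * y ^ a = C * (y ^ a / a) := by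
    rw [Real.Gamma_add_one ha.ne', hCdef]
    field_simp
  have hM : (gammaMeasure a (1/2)) (Iio y) = ∫⁻ x in Ioo 0 y, gammaPDF a (1/2) x := by
    rw [gammaMeasure, withDensity_apply _ measurableSet_Iio,
      ← Set.Iio_union_Ico_eq_Iio hy.le,
      lintegral_union measurableSet_Ico
        ((Set.Iio_disjoint_Ici le_rfl).mono_right Set.Ico_subset_Ici_self)]
    rw [setLIntegral_congr_fun measurableSet_Iio
      (fun x (hx : x < 0) => gammaPDF_of_neg hx), lintegral_zero, zero_add]
    exact (setLIntegral_congr Ioo_ae_eq_Ico).symm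
  have hpdf : ∀ x ∈ Ioo (0:ℝ) y, gammaPDF a (1/2) x
      = ENNReal.ofReal (C * x ^ (a - 1) * Real.exp (-(x / 2))) := by
    intro x hx
    rw [gammaPDF_of_nonneg hx.1.le, ← hCdef, show -(1/2 * x) = -(x/2) by ring]
  have hupper : (gammaMeasure a (1/2)) (Iio y) ≤ ENNReal.ofReal (C * (y ^ a / a)) := by
    rw [hM]
    calc ∫⁻ x in Ioo 0 y, gammaPDF a (1/2) x
        ≤ ∫⁻ x in Ioo 0 y, ENNReal.ofReal (C * x ^ (a - 1)) := by
          refine setLIntegral_mono' measurableSet_Ioo (fun x hx => ?_)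
          rw [hpdf x hx]
          refine ENNReal.ofReal_le_ofReal ?_
          have hx0 : (0:ℝ) < x := hx.1
          have h1 : Real.exp (-(x / 2)) ≤ 1 := by
            rw [Real.exp_le_one_iff]; linarith
          exact mul_le_of_le_one_right (by positivity) h1
      _ = ENNReal.ofReal (∫ x in Ioo (0:ℝ) y, C * x ^ (a - 1)) := by
          rw [ofReal_integral_eq_lintegral_ofReal (((aux_intOn_rpow ha y).const_mul C))]
          refine (ae_restrict_iff' measurableSet_Ioo).mpr (ae_of_all _ (fun x hx => ?_))
          have hx0 : (0:ℝ) < x := hx.1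
          positivity
      _ = ENNReal.ofReal (C * (y ^ a / a)) := by
          rw [integral_const_mul, aux_int_rpow ha hy]
  have hlower : ENNReal.ofReal (Real.exp (-(y / 2)) * C * (y ^ a / a))
      ≤ (gammaMeasure a (1/2)) (Iio y) := by
    rw [hM]
    calc ENNReal.ofReal (Real.exp (-(y / 2)) * C * (y ^ a / a))
        = ENNReal.ofReal (∫ x in Ioo (0:ℝ) y, Real.exp (-(y / 2)) * C * x ^ (a - 1)) := by
          rw [integral_const_mul, aux_int_rpow ha hy]
      _ = ∫⁻ x in Ioo 0 y, ENNReal.ofReal (Real.exp (-(y / 2)) * C * x ^ (a - 1)) := by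
          rw [ofReal_integral_eq_lintegral_ofReal
            (((aux_intOn_rpow ha y).const_mul (Real.exp (-(y / 2)) * C)))]
          refine (ae_restrict_iff' measurableSet_Ioo).mpr (ae_of_all _ (fun x hx => ?_))
          have hx0 : (0:ℝ) < x := hx.1
          positivity
      _ ≤ ∫⁻ x in Ioo 0 y, gammaPDF a (1/2) x := by
          refine setLIntegral_mono' measurableSet_Ioo (fun x hx => ?_)
          rw [hpdf x hx]
          refine ENNReal.ofReal_le_ofReal ?_
          have hx0 : (0:ℝ) < x := hx.1
          have h1 : Real.exp (-(y / 2)) ≤ Real.exp (-(x / 2)) := by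
            apply Real.exp_le_exp.mpr; linarith [hx.2]
          calc Real.exp (-(y / 2)) * C * x ^ (a - 1)
              = (C * x ^ (a - 1)) * Real.exp (-(y / 2)) := by ring
            _ ≤ (C * x ^ (a - 1)) * Real.exp (-(x / 2)) := by
                exact mul_le_mul_of_nonneg_left h1 (by positivity)
  have hfin : (gammaMeasure a (1/2)) (Iio y) ≠ ⊤ :=
    hupper.trans_lt ENNReal.ofReal_lt_top |>.ne
  constructor
  · rw [hsimp, ← mul_assoc]
    exact (ENNReal.ofReal_le_iff_le_toReal hfin).mp hlower
  · rw [hsimp]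
    exact ENNReal.toReal_le_of_le_ofReal (by positivity) hupper

lemma gaussian_moment {ν : ℝ} (hν : 0 < ν) :
    Integrable (fun z : ℝ => max z 0 ^ ν) (gaussianReal 0 1) ∧
    ∫ z, max z 0 ^ ν ∂(gaussianReal 0 1)
      = 2 ^ (ν/2 - 1) * Real.Gamma ((ν + 1)/2) / Real.sqrt Real.pi := by
  have hne : -1 < ν := by linarith
  set c : ℝ := (Real.sqrt (2 * Real.pi))⁻¹ with hc
  have hpdfeq : ∀ x : ℝ, gaussianPDFReal 0 1 x = c * Real.exp (-(1/2) * x ^ 2) := by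
    intro x
    unfold gaussianPDFReal
    norm_num
    ring_nf
    rw [hc, Real.sqrt_mul (by norm_num : (0:ℝ) ≤ 2), mul_inv]
    ring
  -- rewrite the gaussian measure as withDensity
  have hmeas : gaussianReal 0 1
      = volume.withDensity (fun x => ((gaussianPDFReal 0 1 x).toNNReal : ENNReal)) := by
    rw [gaussianReal_of_var_ne_zero 0 one_ne_zero]
    rfl
  have hf_meas : Measurable fun x => (gaussianPDFReal 0 1 x).toNNReal :=
    (measurable_gaussianPDFReal 0 1).real_toNNReal
  have hsmul : ∀ z : ℝ, (gaussianPDFReal 0 1 z).toNNReal • (max z 0 ^ ν)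
      = gaussianPDFReal 0 1 z * max z 0 ^ ν := by
    intro z
    rw [NNReal.smul_def, Real.coe_toNNReal _ (gaussianPDFReal_nonneg 0 1 z), smul_eq_mul]
  -- integrability over volume
  have hIoi : IntegrableOn (fun z : ℝ => gaussianPDFReal 0 1 z * max z 0 ^ ν) (Ioi 0) := by
    refine MeasureTheory.IntegrableOn.congr_fun
      ((integrableOn_rpow_mul_exp_neg_mul_sq (by norm_num : (0:ℝ) < 1/2) hne).const_mul c)
      (fun x hx => ?_) measurableSet_Ioi
    rw [hpdfeq x, max_eq_left (le_of_lt hx)]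
    ring
  have hIic : IntegrableOn (fun z : ℝ => gaussianPDFReal 0 1 z * max z 0 ^ ν) (Iic 0) := by
    refine MeasureTheory.IntegrableOn.congr_fun integrableOn_zero
      (fun x hx => ?_) measurableSet_Iic
    rw [max_eq_right (hx : x ≤ 0), Real.zero_rpow hν.ne', mul_zero]
  have hint : Integrable (fun z : ℝ => gaussianPDFReal 0 1 z * max z 0 ^ ν) := by
    rw [← integrableOn_univ, ← Set.Iic_union_Ioi (a := (0:ℝ)), integrableOn_union]
    exact ⟨hIic, hIoi⟩
  have hint' : Integrable (fun z : ℝ => max z 0 ^ ν) (gaussianReal 0 1) := by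
    rw [hmeas, integrable_withDensity_iff_integrable_smul hf_meas]
    exact hint.congr (ae_of_all _ (fun z => (hsmul z).symm))
  refine ⟨hint', ?_⟩
  have h1 : ∫ z, max z 0 ^ ν ∂(gaussianReal 0 1)
      = ∫ z, gaussianPDFReal 0 1 z * max z 0 ^ ν := by
    rw [hmeas, integral_withDensity_eq_integral_smul hf_meas]
    exact integral_congr_ae (ae_of_all _ hsmul)
  rw [h1]
  have hsplit : ∫ z, gaussianPDFReal 0 1 z * max z 0 ^ ν
      = ∫ z in Ioi (0:ℝ), gaussianPDFReal 0 1 z * max z 0 ^ ν := by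
    rw [← setIntegral_univ, ← Set.Iic_union_Ioi (a := (0:ℝ)),
      setIntegral_union (Set.Iic_disjoint_Ioi le_rfl) measurableSet_Ioi hIic hIoi]
    rw [setIntegral_congr_fun measurableSet_Iic (fun x hx => by
      rw [max_eq_right (hx : x ≤ 0), Real.zero_rpow hν.ne', mul_zero]), integral_zero, zero_add]
  rw [hsplit]
  have h2 : ∫ z in Ioi (0:ℝ), gaussianPDFReal 0 1 z * max z 0 ^ ν
      = c * ∫ z in Ioi (0:ℝ), z ^ ν * Real.exp (-(1/2) * z ^ (2:ℝ)) := by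
    rw [← integral_const_mul]
    refine setIntegral_congr_fun measurableSet_Ioi (fun x hx => ?_)
    rw [hpdfeq x, max_eq_left (le_of_lt hx), ← Real.rpow_natCast x 2]
    push_cast
    ring
  rw [h2, integral_rpow_mul_exp_neg_mul_rpow two_pos hne (by norm_num : (0:ℝ) < 1/2)]
  -- final algebra
  rw [hc, Real.sqrt_mul (by norm_num : (0:ℝ) ≤ 2), Real.sqrt_eq_rpow 2]
  have h12 : ((1:ℝ)/2) ^ (-(ν + 1) / 2) = 2 ^ ((ν + 1) / 2) := by
    rw [one_div, ← Real.rpow_neg_one 2, ← Real.rpow_mul (by norm_num : (0:ℝ) ≤ 2)]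
    congr 1
    ring
  rw [h12]
  have hππ : Real.sqrt Real.pi ≠ 0 := ne_of_gt (Real.sqrt_pos.mpr Real.pi_pos)
  have key : (2:ℝ) ^ ((ν-2)/2) * (2:ℝ) ^ ((1:ℝ)/2) * 2 = 2 ^ ((ν+1)/2) := by
    rw [← Real.rpow_add two_pos, ← Real.rpow_add_one (two_ne_zero)]
    congr 1
    ring
  field_simp
  rw [← key]
  ring

end auxlemmas
open MeasureTheory ProbabilityTheory Real Filter

theorem t_tail_and_quantile_asymptotics
    {Ω : Type*} [MeasurableSpace Ω] (P : Measure Ω) [IsProbabilityMeasure P]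
    (ν : ℝ) (hν : 0 < ν)
    (S Z : Ω → ℝ) (hS : ∀ ω, 0 < S ω)
    (hchi : Measure.map (fun ω => ν * S ω ^ 2) P = gammaMeasure (ν / 2) (1 / 2))
    (hZ : Measure.map Z P = gaussianReal 0 1)
    (hindep : IndepFun S Z P)
    (F : ℝ → ℝ)
    (hF : F = fun x => (P {ω | (S ω)⁻¹ * Z ω ≤ x}).toReal)
    (q : ℝ → ℝ)
    (hq : q = fun u => sInf {x : ℝ | 1 - u ≤ F x})
    (K : ℝ)
    (hK : K = (ν / 2) ^ (ν / 2) / Real.Gamma (ν / 2 + 1) *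
      (2 ^ (ν / 2 - 1) * Real.Gamma ((ν + 1) / 2) / Real.sqrt Real.pi)) :
    Filter.Tendsto (fun x : ℝ => (1 - F x) / (K * x ^ (-ν))) Filter.atTop (nhds 1) ∧
    Filter.Tendsto (fun u : ℝ => q u / (K ^ (1 / ν) * u ^ (-1 / ν)))
      (nhdsWithin 0 (Set.Ioi 0)) (nhds 1) := by
  have hν2 : 0 < ν / 2 := by linarith
  set cc : ℝ := (ν / 2) ^ (ν / 2) / Real.Gamma (ν / 2 + 1) with hcc
  have hccpos : 0 < cc := by
    have := Real.Gamma_pos_of_pos (show (0:ℝ) < ν/2 + 1 by linarith)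
    positivity
  have hKpos : 0 < K := by
    rw [hK]
    have h1 := Real.Gamma_pos_of_pos (show (0:ℝ) < ν/2 + 1 by linarith)
    have h2 := Real.Gamma_pos_of_pos (show (0:ℝ) < (ν+1)/2 by linarith)
    have h3 := Real.sqrt_pos.mpr Real.pi_pos
    positivity
  -- measurability of Z and S
  have hZm : AEMeasurable Z P := by
    by_contra h
    rw [Measure.map_of_not_aemeasurable h] at hZ
    have h1 : (gaussianReal 0 1) Set.univ = 1 := measure_univ
    rw [← hZ] at h1; simp at h1
  haveI hgamprob : IsProbabilityMeasure (gammaMeasure (ν/2) (1/2)) :=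
    isProbabilityMeasure_gammaMeasure hν2 (by norm_num)
  have hgm : AEMeasurable (fun ω => ν * S ω ^ 2) P := by
    by_contra h
    rw [Measure.map_of_not_aemeasurable h] at hchi
    have h1 : (gammaMeasure (ν/2) (1/2)) Set.univ = 1 := measure_univ
    rw [← hchi] at h1; simp at h1
  have hSm : AEMeasurable S P := by
    have hSeq : S = fun ω => Real.sqrt ((ν * S ω ^ 2) / ν) := by
      funext ω
      rw [mul_div_cancel_left₀ _ hν.ne', Real.sqrt_sq (hS ω).le]
    rw [hSeq]
    exact (Real.continuous_sqrt.measurable.comp (measurable_id.div_const ν)).comp_aemeasurable hgm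
  set μ : Measure ℝ := Measure.map S P with hμ
  set γ : Measure ℝ := gaussianReal 0 1 with hγ
  haveI hμprob : IsProbabilityMeasure μ := Measure.isProbabilityMeasure_map hSm
  have hμIic : μ (Set.Iic 0) = 0 := by
    rw [hμ, Measure.map_apply_of_aemeasurable hSm measurableSet_Iic]
    have : S ⁻¹' Set.Iic 0 = ∅ := by
      ext ω; simp [(hS ω).not_ge]
    rw [this, measure_empty]
  have hconull : μ (Set.Ioi (0:ℝ))ᶜ = 0 := by rw [Set.compl_Ioi]; exact hμIic
  have hg2m : Measurable fun s : ℝ => ν * s ^ 2 :=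
    measurable_const.mul (measurable_id.pow_const 2)
  have hmapg : Measure.map (fun s : ℝ => ν * s ^ 2) μ = gammaMeasure (ν/2) (1/2) := by
    rw [hμ, AEMeasurable.map_map_of_aemeasurable hg2m.aemeasurable hSm]
    exact hchi
  have hH : ∀ t : ℝ, 0 < t → μ (Set.Iio t) = (gammaMeasure (ν/2) (1/2)) (Set.Iio (ν * t ^ 2)) := by
    intro t ht
    rw [← hmapg, Measure.map_apply_of_aemeasurable hg2m.aemeasurable measurableSet_Iio,
      ← measure_inter_conull (s := (fun s : ℝ => ν * s ^ 2) ⁻¹' Set.Iio (ν * t ^ 2)) hconull,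
      ← measure_inter_conull (s := Set.Iio t) hconull]
    congr 1
    ext s
    simp only [Set.mem_inter_iff, Set.mem_preimage, Set.mem_Iio, Set.mem_Ioi]
    constructor
    · rintro ⟨h1, h2⟩
      have hst : s ^ 2 < t ^ 2 := pow_lt_pow_left₀ h1 h2.le two_ne_zero
      exact ⟨by nlinarith, h2⟩
    · rintro ⟨h1, h2⟩
      have hst : s ^ 2 < t ^ 2 := by nlinarith
      exact ⟨(pow_lt_pow_iff_left₀ h2.le ht.le two_ne_zero).mp hst, h2⟩
  -- the function h
  set hfun : ℝ → ℝ := fun t => (μ (Set.Iio t)).toReal with hfundef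
  have hmono : Monotone (fun t : ℝ => μ (Set.Iio t)) :=
    fun t₁ t₂ h => measure_mono (Set.Iio_subset_Iio h)
  have hfun_meas : Measurable hfun := ENNReal.measurable_toReal.comp hmono.measurable
  have hfun_nonneg : ∀ t, 0 ≤ hfun t := fun t => ENNReal.toReal_nonneg
  have hfun_zero : ∀ t : ℝ, t ≤ 0 → hfun t = 0 := by
    intro t ht
    have : μ (Set.Iio t) = 0 :=
      le_antisymm (le_trans (measure_mono (Set.Iio_subset_Iic_self.trans (Set.Iic_subset_Iic.mpr ht))) hμIic.le) zero_le
    simp only [hfundef]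
    rw [this, ENNReal.toReal_zero]
  have hrpow_conv : ∀ t : ℝ, 0 < t →
      (1/2 : ℝ) ^ (ν/2) / Real.Gamma (ν/2 + 1) * (ν * t ^ 2) ^ (ν/2) = cc * t ^ ν := by
    intro t ht
    have h1 : (ν * t ^ 2 : ℝ) ^ (ν/2) = ν ^ (ν/2) * (t ^ 2) ^ (ν/2) :=
      Real.mul_rpow hν.le (sq_nonneg t)
    have h2 : ((t : ℝ) ^ 2) ^ (ν/2) = t ^ ν := by
      rw [← Real.rpow_natCast t 2, ← Real.rpow_mul ht.le]
      congr 1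
      ring
    have h3 : (1/2 : ℝ) ^ (ν/2) * ν ^ (ν/2) = (ν/2) ^ (ν/2) := by
      rw [← Real.mul_rpow (by norm_num) hν.le]
      congr 1
      ring
    rw [h1, h2, hcc]
    field_simp
    rw [← h3]
  have hfun_le : ∀ t : ℝ, 0 < t → hfun t ≤ cc * t ^ ν := by
    intro t ht
    have hy : 0 < ν * t ^ 2 := by positivity
    have := (gamma_Iio_bounds hν2 hy).2
    show (μ (Set.Iio t)).toReal ≤ cc * t ^ ν
    calc (μ (Set.Iio t)).toReal = ((gammaMeasure (ν/2) (1/2)) (Set.Iio (ν * t ^ 2))).toReal := by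
          rw [hH t ht]
      _ ≤ (1/2 : ℝ) ^ (ν/2) / Real.Gamma (ν/2 + 1) * (ν * t ^ 2) ^ (ν/2) := this
      _ = cc * t ^ ν := hrpow_conv t ht
  have hfun_ge : ∀ t : ℝ, 0 < t →
      Real.exp (-(ν * t ^ 2 / 2)) * (cc * t ^ ν) ≤ hfun t := by
    intro t ht
    have hy : 0 < ν * t ^ 2 := by positivity
    have h := (gamma_Iio_bounds hν2 hy).1
    rw [hrpow_conv t ht] at h
    show Real.exp (-(ν * t ^ 2 / 2)) * (cc * t ^ ν) ≤ (μ (Set.Iio t)).toReal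
    rw [hH t ht]
    exact h
  -- tail formula
  have htail : ∀ x : ℝ, 0 < x → 1 - F x = ∫ z, hfun (z / x) ∂γ := by
    intro x hx
    have hTm : AEMeasurable (fun ω => (S ω)⁻¹ * Z ω) P := hSm.inv.mul hZm
    have hsetc : {ω | x < (S ω)⁻¹ * Z ω} = {ω | (S ω)⁻¹ * Z ω ≤ x}ᶜ := by
      ext ω; simp [not_le]
    have hnm : NullMeasurableSet {ω | (S ω)⁻¹ * Z ω ≤ x} P :=
      hTm.nullMeasurable measurableSet_Iic
    have hcompl : P {ω | x < (S ω)⁻¹ * Z ω} = 1 - P {ω | (S ω)⁻¹ * Z ω ≤ x} := by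
      rw [hsetc, measure_compl₀ hnm (measure_ne_top P _), measure_univ]
    have hFle1 : P {ω | (S ω)⁻¹ * Z ω ≤ x} ≤ 1 := prob_le_one
    have h1F : 1 - F x = (P {ω | x < (S ω)⁻¹ * Z ω}).toReal := by
      rw [hcompl, hF, ENNReal.toReal_sub_of_le hFle1 ENNReal.one_ne_top, ENNReal.toReal_one]
    -- product measure
    have hprod : Measure.map (fun ω => (S ω, Z ω)) P = μ.prod γ := by
      rw [hμ, ← hZ]
      exact (indepFun_iff_map_prod_eq_prod_map_map hSm hZm).mp hindep
    have hA : MeasurableSet {p : ℝ × ℝ | x < p.1⁻¹ * p.2} :=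
      measurableSet_lt measurable_const (measurable_fst.inv.mul measurable_snd)
    have hpre : {ω | x < (S ω)⁻¹ * Z ω}
        = (fun ω => (S ω, Z ω)) ⁻¹' {p : ℝ × ℝ | x < p.1⁻¹ * p.2} := rfl
    have hPval : P {ω | x < (S ω)⁻¹ * Z ω} = (μ.prod γ) {p : ℝ × ℝ | x < p.1⁻¹ * p.2} := by
      rw [hpre, ← Measure.map_apply_of_aemeasurable (hSm.prodMk hZm) hA, hprod]
    have hslice : ∀ z : ℝ, μ {s : ℝ | x < s⁻¹ * z} = μ (Set.Iio (z / x)) := by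
      intro z
      rw [← measure_inter_conull (s := {s : ℝ | x < s⁻¹ * z}) hconull,
        ← measure_inter_conull (s := Set.Iio (z / x)) hconull]
      congr 1
      ext s
      simp only [Set.mem_inter_iff, Set.mem_setOf_eq, Set.mem_Iio, Set.mem_Ioi]
      constructor
      · rintro ⟨h1, h2⟩
        rw [inv_mul_eq_div, lt_div_iff₀ h2] at h1
        exact ⟨(lt_div_iff₀ hx).mpr (by linarith), h2⟩
      · rintro ⟨h1, h2⟩
        rw [lt_div_iff₀ hx] at h1
        exact ⟨by rw [inv_mul_eq_div, lt_div_iff₀ h2]; linarith, h2⟩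
    have hfubini : (μ.prod γ) {p : ℝ × ℝ | x < p.1⁻¹ * p.2}
        = ∫⁻ z, μ (Set.Iio (z / x)) ∂γ := by
      rw [Measure.prod_apply_symm hA]
      congr 1
      funext z
      have : (fun s => (s, z)) ⁻¹' {p : ℝ × ℝ | x < p.1⁻¹ * p.2} = {s : ℝ | x < s⁻¹ * z} := rfl
      rw [this, hslice z]
    rw [h1F, hPval, hfubini]
    exact (integral_toReal ((hmono.measurable.comp (measurable_id.div_const x)).aemeasurable)
      (ae_of_all _ (fun z => measure_lt_top μ _))).symm
  -- the dominated convergence argument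
  have hmoment := gaussian_moment hν
  have hEb : Integrable (fun z : ℝ => cc * max z 0 ^ ν) γ := hmoment.1.const_mul cc
  have hdct : Tendsto (fun x : ℝ => ∫ z, x ^ ν * hfun (z / x) ∂γ) atTop
      (nhds (∫ z, cc * max z 0 ^ ν ∂γ)) := by
    refine tendsto_integral_filter_of_dominated_convergence (fun z => cc * max z 0 ^ ν)
      ?_ ?_ hEb ?_
    · exact Eventually.of_forall (fun x =>
        ((hfun_meas.comp (measurable_id.div_const x)).const_mul _).aestronglyMeasurable)
    · filter_upwards [eventually_gt_atTop (0:ℝ)] with x hx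
      refine ae_of_all _ (fun z => ?_)
      rcases le_or_gt z 0 with hz | hz
      · rw [hfun_zero (z / x) (div_nonpos_of_nonpos_of_nonneg hz hx.le), mul_zero, norm_zero,
          max_eq_right hz, Real.zero_rpow hν.ne', mul_zero]
      · have hzx : 0 < z / x := div_pos hz hx
        rw [Real.norm_of_nonneg (mul_nonneg (Real.rpow_nonneg hx.le ν) (hfun_nonneg _)),
          max_eq_left hz.le]
        calc x ^ ν * hfun (z / x) ≤ x ^ ν * (cc * (z / x) ^ ν) := by
              exact mul_le_mul_of_nonneg_left (hfun_le _ hzx) (Real.rpow_nonneg hx.le ν)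
          _ = cc * z ^ ν := by
              rw [Real.div_rpow hz.le hx.le]
              field_simp [(Real.rpow_pos_of_pos hx ν).ne']
    · refine ae_of_all _ (fun z => ?_)
      rcases le_or_gt z 0 with hz | hz
      · rw [max_eq_right hz, Real.zero_rpow hν.ne', mul_zero]
        refine Tendsto.congr' ?_ tendsto_const_nhds
        filter_upwards [eventually_gt_atTop (0:ℝ)] with x hx
        rw [hfun_zero (z / x) (div_nonpos_of_nonpos_of_nonneg hz hx.le), mul_zero]
      · rw [max_eq_left hz.le]
        have halg : ∀ x : ℝ, 0 < x →
            x ^ ν * (Real.exp (-(ν * (z/x) ^ 2 / 2)) * (cc * (z/x) ^ ν))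
              = Real.exp (-(ν * (z/x) ^ 2 / 2)) * (cc * z ^ ν) := by
          intro x hx
          have hzx : 0 < z / x := div_pos hz hx
          rw [Real.div_rpow hz.le hx.le]
          field_simp [(Real.rpow_pos_of_pos hx ν).ne']
        have hlow : Tendsto (fun x : ℝ => Real.exp (-(ν * (z/x) ^ 2 / 2)) * (cc * z ^ ν))
            atTop (nhds (cc * z ^ ν)) := by
          have hzx0 : Tendsto (fun x : ℝ => z / x) atTop (nhds 0) :=
            tendsto_const_nhds.div_atTop tendsto_id
          have hcont : Continuous (fun t : ℝ => Real.exp (-(ν * t ^ 2 / 2))) :=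
            Real.continuous_exp.comp ((continuous_const.mul (continuous_pow 2)).div_const 2).neg
          have := (hcont.tendsto 0).comp hzx0
          simp only [Function.comp_def] at this
          norm_num at this
          have h2 := this.mul_const (cc * z ^ ν)
          rwa [one_mul] at h2
        refine tendsto_of_tendsto_of_tendsto_of_le_of_le' hlow tendsto_const_nhds ?_ ?_
        · filter_upwards [eventually_gt_atTop (0:ℝ)] with x hx
          have hzx : 0 < z / x := div_pos hz hx
          rw [← halg x hx]
          exact mul_le_mul_of_nonneg_left (hfun_ge _ hzx) (Real.rpow_nonneg hx.le ν)
        · filter_upwards [eventually_gt_atTop (0:ℝ)] with x hx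
          have hzx : 0 < z / x := div_pos hz hx
          calc x ^ ν * hfun (z / x) ≤ x ^ ν * (cc * (z / x) ^ ν) :=
                mul_le_mul_of_nonneg_left (hfun_le _ hzx) (Real.rpow_nonneg hx.le ν)
            _ = cc * z ^ ν := by
                rw [Real.div_rpow hz.le hx.le]
                field_simp [(Real.rpow_pos_of_pos hx ν).ne']
  have hintval : ∫ z, cc * max z 0 ^ ν ∂γ = K := by
    rw [integral_const_mul, hmoment.2, hK]
  have hmain : Tendsto (fun x : ℝ => x ^ ν * (1 - F x)) atTop (nhds K) := by
    rw [← hintval]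
    refine hdct.congr' ?_
    filter_upwards [eventually_gt_atTop (0:ℝ)] with x hx
    rw [htail x hx, ← integral_const_mul]
  have part1 : Tendsto (fun x : ℝ => (1 - F x) / (K * x ^ (-ν))) atTop (nhds 1) := by
    have h := hmain.div_const K
    rw [div_self hKpos.ne'] at h
    refine h.congr' ?_
    filter_upwards [eventually_gt_atTop (0:ℝ)] with x hx
    rw [Real.rpow_neg hx.le]
    have hxν : (0:ℝ) < x ^ ν := Real.rpow_pos_of_pos hx ν
    field_simp
  refine ⟨part1, ?_⟩
  -- Part 2 : quantile asymptotics
  set T : ℝ → ℝ := fun x => 1 - F x with hT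
  have hF_le_one : ∀ x, F x ≤ 1 := by
    intro x
    rw [hF]
    calc (P {ω | (S ω)⁻¹ * Z ω ≤ x}).toReal ≤ (1 : ENNReal).toReal :=
          ENNReal.toReal_mono ENNReal.one_ne_top prob_le_one
      _ = 1 := ENNReal.toReal_one
  have hFmono : Monotone F := by
    intro x y hxy
    rw [hF]
    exact ENNReal.toReal_mono (measure_ne_top P _)
      (measure_mono (fun ω h => le_trans h hxy))
  have hTanti : Antitone T := fun x y hxy => by
    simp only [hT]; linarith [hFmono hxy]
  have hTnonneg : ∀ x, 0 ≤ T x := fun x => by simp only [hT]; linarith [hF_le_one x]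
  have hmainT : Tendsto (fun x : ℝ => x ^ ν * T x) atTop (nhds K) := hmain
  have hTto0 : Tendsto T atTop (nhds 0) := by
    have h := hmainT.mul (tendsto_rpow_neg_atTop hν)
    rw [mul_zero] at h
    refine h.congr' ?_
    filter_upwards [eventually_gt_atTop (0:ℝ)] with x hx
    have hxν : (0:ℝ) < x ^ ν := Real.rpow_pos_of_pos hx ν
    rw [Real.rpow_neg hx.le, mul_comm (x ^ ν) (T x), mul_assoc,
      mul_inv_cancel₀ hxν.ne', mul_one]
  have hTpos : ∀ x, 0 < T x := by
    intro x
    have hev : ∀ᶠ y in atTop, 0 < y ∧ 0 < y ^ ν * T y :=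
      (eventually_gt_atTop (0:ℝ)).and (hmainT.eventually_const_lt hKpos)
    obtain ⟨y, hxy, hy0, hyT⟩ := ((eventually_ge_atTop x).and hev).exists
    have hTy : 0 < T y := by
      by_contra h
      push_neg at h
      nlinarith [Real.rpow_pos_of_pos hy0 ν]
    exact lt_of_lt_of_le hTy (hTanti hxy)
  have hseteq : ∀ u : ℝ, {x : ℝ | 1 - u ≤ F x} = {x : ℝ | T x ≤ u} := by
    intro u
    ext x
    simp only [Set.mem_setOf_eq, hT]
    constructor <;> intro <;> linarith
  have hqdef : ∀ u : ℝ, q u = sInf {x : ℝ | T x ≤ u} := by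
    intro u
    rw [hq]
    show sInf {x : ℝ | 1 - u ≤ F x} = _
    rw [hseteq u]
  have hne : ∀ u : ℝ, 0 < u → {x : ℝ | T x ≤ u}.Nonempty := by
    intro u hu
    obtain ⟨x, hx⟩ := (hTto0.eventually_lt_const hu).exists
    exact ⟨x, hx.le⟩
  have hbdd : ∀ u : ℝ, u < T 0 → BddBelow {x : ℝ | T x ≤ u} := by
    intro u hu
    refine ⟨0, fun x hx => ?_⟩
    by_contra h
    push_neg at h
    exact absurd (le_trans (hTanti h.le) hx) (not_le.mpr hu)
  have key1 : ∀ u : ℝ, 0 < u → u < T 0 → T (q u + 1) ≤ u := by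
    intro u hu huT
    have h : sInf {x : ℝ | T x ≤ u} < q u + 1 := by rw [← hqdef]; linarith
    obtain ⟨x, hx, hxlt⟩ := (csInf_lt_iff (hbdd u huT) (hne u hu)).mp h
    exact le_trans (hTanti hxlt.le) hx
  have key2 : ∀ u : ℝ, 0 < u → u < T 0 → u < T (q u - 1) := by
    intro u hu huT
    by_contra h
    push_neg at h
    have h2 : sInf {x : ℝ | T x ≤ u} ≤ q u - 1 := csInf_le (hbdd u huT) h
    rw [← hqdef u] at h2
    linarith
  have hT0pos : 0 < T 0 := hTpos 0
  have hq_top : Tendsto q (nhdsWithin 0 (Set.Ioi 0)) atTop := by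
    rw [tendsto_atTop]
    intro M
    have hδ : (0:ℝ) < min (T 0) (T (M + 1)) := lt_min hT0pos (hTpos _)
    filter_upwards [Ioo_mem_nhdsGT hδ] with u hu
    obtain ⟨hu0, huδ⟩ := hu
    have huT0 : u < T 0 := lt_of_lt_of_le huδ (min_le_left _ _)
    have huTM : u < T (M + 1) := lt_of_lt_of_le huδ (min_le_right _ _)
    by_contra h
    push_neg at h
    have : T (M + 1) ≤ T (q u + 1) := hTanti (by linarith)
    linarith [key1 u hu0 huT0]
  -- limits of the comparison functions
  have hq1_top : Tendsto (fun u => q u + 1) (nhdsWithin 0 (Set.Ioi 0)) atTop :=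
    tendsto_atTop_add_const_right _ 1 hq_top
  have hq2_top : Tendsto (fun u => q u - 1) (nhdsWithin 0 (Set.Ioi 0)) atTop :=
    (tendsto_atTop_add_const_right _ (-1) hq_top).congr
      (fun u => (by ring : q u + (-1) = q u - 1))
  have hR1 : Tendsto (fun u => (q u + 1) ^ ν * T (q u + 1)) (nhdsWithin 0 (Set.Ioi 0))
      (nhds K) := hmainT.comp hq1_top
  have hR2 : Tendsto (fun u => (q u - 1) ^ ν * T (q u - 1)) (nhdsWithin 0 (Set.Ioi 0))
      (nhds K) := hmainT.comp hq2_top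
  have hKν : (0:ℝ) < K ^ (1/ν) := Real.rpow_pos_of_pos hKpos _
  have hRpow1 : Tendsto (fun u => ((q u + 1) ^ ν * T (q u + 1)) ^ (1/ν))
      (nhdsWithin 0 (Set.Ioi 0)) (nhds (K ^ (1/ν))) :=
    ((Real.continuousAt_rpow_const K (1/ν) (Or.inl hKpos.ne')).tendsto).comp hR1
  have hRpow2 : Tendsto (fun u => ((q u - 1) ^ ν * T (q u - 1)) ^ (1/ν))
      (nhdsWithin 0 (Set.Ioi 0)) (nhds (K ^ (1/ν))) :=
    ((Real.continuousAt_rpow_const K (1/ν) (Or.inl hKpos.ne')).tendsto).comp hR2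
  have hratio1 : Tendsto (fun u => q u / (q u + 1)) (nhdsWithin 0 (Set.Ioi 0)) (nhds 1) := by
    have hyy : Tendsto (fun y : ℝ => y / (y + 1)) atTop (nhds 1) := by
      have h1 : Tendsto (fun y : ℝ => 1 - (y + 1)⁻¹) atTop (nhds 1) := by
        have := Filter.Tendsto.sub (tendsto_const_nhds (x := (1:ℝ)) (f := atTop))
          (tendsto_inv_atTop_zero.comp (tendsto_atTop_add_const_right atTop 1 tendsto_id))
        simpa using this
      refine h1.congr' ?_
      filter_upwards [eventually_gt_atTop (0:ℝ)] with y hy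
      have : y + 1 ≠ 0 := by linarith
      field_simp
      ring
    exact hyy.comp hq_top
  have hratio2 : Tendsto (fun u => q u / (q u - 1)) (nhdsWithin 0 (Set.Ioi 0)) (nhds 1) := by
    have hyy : Tendsto (fun y : ℝ => y / (y - 1)) atTop (nhds 1) := by
      have h1 : Tendsto (fun y : ℝ => 1 + (y - 1)⁻¹) atTop (nhds 1) := by
        have := Filter.Tendsto.add (tendsto_const_nhds (x := (1:ℝ)) (f := atTop))
          (tendsto_inv_atTop_zero.comp ((tendsto_atTop_add_const_right atTop (-1)
            (tendsto_id : Tendsto (fun y : ℝ => y) atTop atTop)).congr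
            (fun y => (by show y + (-1) = y - 1; ring))))
        simpa using this
      refine h1.congr' ?_
      filter_upwards [eventually_gt_atTop (1:ℝ)] with y hy
      have : y - 1 ≠ 0 := by linarith
      field_simp
      ring
    exact hyy.comp hq_top
  have hL : Tendsto (fun u => (q u / (q u + 1)) * (((q u + 1) ^ ν * T (q u + 1)) ^ (1/ν) / K ^ (1/ν)))
      (nhdsWithin 0 (Set.Ioi 0)) (nhds 1) := by
    have := hratio1.mul (hRpow1.div_const (K ^ (1/ν)))
    rwa [div_self hKν.ne', mul_one] at this
  have hU : Tendsto (fun u => (q u / (q u - 1)) * (((q u - 1) ^ ν * T (q u - 1)) ^ (1/ν) / K ^ (1/ν)))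
      (nhdsWithin 0 (Set.Ioi 0)) (nhds 1) := by
    have := hratio2.mul (hRpow2.div_const (K ^ (1/ν)))
    rwa [div_self hKν.ne', mul_one] at this
  -- the representation of the goal function
  have hrepr : ∀ u : ℝ, 0 < u → q u / (K ^ (1/ν) * u ^ (-1/ν)) = q u * u ^ (1/ν) / K ^ (1/ν) := by
    intro u hu
    have huν : (0:ℝ) < u ^ (1/ν) := Real.rpow_pos_of_pos hu _
    rw [show (-1/ν : ℝ) = -(1/ν) by ring, Real.rpow_neg hu.le]
    field_simp
  have hexp : ∀ y : ℝ, 0 < y → (y ^ ν) ^ (1/ν) = y := by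
    intro y hy
    rw [← Real.rpow_mul hy.le, mul_one_div_cancel hν.ne', Real.rpow_one]
  refine tendsto_of_tendsto_of_tendsto_of_le_of_le' hL hU ?_ ?_
  · filter_upwards [eventually_mem_nhdsWithin, Ioo_mem_nhdsGT hT0pos,
      hq_top.eventually (eventually_gt_atTop (2:ℝ)),
      hq1_top.eventually (hmainT.eventually_const_lt hKpos)] with u hu0' huIoo hq2 hR1pos
    have hu0 : (0:ℝ) < u := hu0'
    have huT0 : u < T 0 := huIoo.2
    have hq1pos : (0:ℝ) < q u + 1 := by linarith
    have hTeq : T (q u + 1) = ((q u + 1) ^ ν * T (q u + 1)) / (q u + 1) ^ ν := by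
      rw [eq_div_iff (Real.rpow_pos_of_pos hq1pos ν).ne']
      ring
    have hkey := key1 u hu0 huT0
    rw [hTeq] at hkey
    have h5 : ((q u + 1) ^ ν * T (q u + 1)) ^ (1/ν) / (q u + 1) ≤ u ^ (1/ν) := by
      have hnum : (0:ℝ) ≤ (q u + 1) ^ ν * T (q u + 1) :=
        mul_nonneg (Real.rpow_nonneg hq1pos.le ν) (hTnonneg _)
      have := Real.rpow_le_rpow (div_nonneg hnum (Real.rpow_nonneg hq1pos.le ν)) hkey
        (by positivity : (0:ℝ) ≤ 1/ν)
      rwa [Real.div_rpow hnum (Real.rpow_nonneg hq1pos.le ν), hexp _ hq1pos] at this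
    rw [hrepr u hu0]
    calc (q u / (q u + 1)) * (((q u + 1) ^ ν * T (q u + 1)) ^ (1/ν) / K ^ (1/ν))
        = q u * (((q u + 1) ^ ν * T (q u + 1)) ^ (1/ν) / (q u + 1)) / K ^ (1/ν) := by ring
      _ ≤ q u * u ^ (1/ν) / K ^ (1/ν) := by gcongr <;> linarith
  · filter_upwards [eventually_mem_nhdsWithin, Ioo_mem_nhdsGT hT0pos,
      hq_top.eventually (eventually_gt_atTop (2:ℝ)),
      hq2_top.eventually (hmainT.eventually_const_lt hKpos)] with u hu0' huIoo hq2 hR2pos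
    have hu0 : (0:ℝ) < u := hu0'
    have huT0 : u < T 0 := huIoo.2
    have hq2pos : (0:ℝ) < q u - 1 := by linarith
    have hTeq : T (q u - 1) = ((q u - 1) ^ ν * T (q u - 1)) / (q u - 1) ^ ν := by
      rw [eq_div_iff (Real.rpow_pos_of_pos hq2pos ν).ne']
      ring
    have hkey := (key2 u hu0 huT0).le
    rw [hTeq] at hkey
    have h5 : u ^ (1/ν) ≤ ((q u - 1) ^ ν * T (q u - 1)) ^ (1/ν) / (q u - 1) := by
      have hnum : (0:ℝ) ≤ (q u - 1) ^ ν * T (q u - 1) :=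
        mul_nonneg (Real.rpow_nonneg hq2pos.le ν) (hTnonneg _)
      have := Real.rpow_le_rpow hu0.le hkey (by positivity : (0:ℝ) ≤ 1/ν)
      rwa [Real.div_rpow hnum (Real.rpow_nonneg hq2pos.le ν), hexp _ hq2pos] at this
    rw [hrepr u hu0]
    calc q u * u ^ (1/ν) / K ^ (1/ν)
        ≤ q u * (((q u - 1) ^ ν * T (q u - 1)) ^ (1/ν) / (q u - 1)) / K ^ (1/ν) := by
          gcongr <;> linarith
      _ = (q u / (q u - 1)) * (((q u - 1) ^ ν * T (q u - 1)) ^ (1/ν) / K ^ (1/ν)) := by ring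
end

section
/- Let X, Z, ρ be independent, X and Z standard normal, ρ taking values in (-1,1) with essential supremum 1 (i.e., P(ρ > ρ₀) > 0 for every ρ₀ < 1). Set Y = ρX + √(1-ρ²) Z and let C(u,u) = P(X ≤ Φ^{-1}(u), Y ≤ Φ^{-1}(u)) be the diagonal of the copula of (X,Y). Then for every ε > 0, lim_{u↓0} u^{-1-ε} C(u,u) = ∞; equivalently the Ledford–Tawn index η = lim_{u↓0} log u / log C(u,u) equals 1. -/
open MeasureTheory ProbabilityTheory Real Filter Set Topology

noncomputable def sφ (x : ℝ) : ℝ := (Real.sqrt (2*π))⁻¹ * rexp (-x^2/2)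

lemma pdf_eq : gaussianPDFReal 0 1 = sφ := by
  ext x; simp [gaussianPDFReal, sφ]

lemma sφ_pos (x : ℝ) : 0 < sφ x := by
  unfold sφ; positivity

lemma sφ_int : MeasureTheory.Integrable sφ := by
  rw [← pdf_eq]; exact integrable_gaussianPDFReal 0 1

noncomputable def stdΦ (x : ℝ) : ℝ := ((gaussianReal 0 1) (Set.Iic x)).toReal

lemma stdΦ_eq_integral (x : ℝ) : stdΦ x = ∫ t in Set.Iic x, sφ t := by
  rw [stdΦ, gaussianReal_apply_eq_integral 0 one_ne_zero, ENNReal.toReal_ofReal, pdf_eq]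
  rw [pdf_eq]
  exact setIntegral_nonneg measurableSet_Iic (fun t _ => (sφ_pos t).le)

lemma stdΦ_mono : Monotone stdΦ := by
  intro a b hab
  unfold stdΦ
  refine ENNReal.toReal_mono (measure_ne_top _ _) (measure_mono (Set.Iic_subset_Iic.2 hab))

lemma stdΦ_continuous : Continuous stdΦ := by
  have h : ∀ x, stdΦ x = stdΦ 0 + ∫ t in (0:ℝ)..x, sφ t := by
    intro x
    rw [stdΦ_eq_integral, stdΦ_eq_integral,
      ← intervalIntegral.integral_Iic_sub_Iic sφ_int.integrableOn sφ_int.integrableOn]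
    ring
  rw [show stdΦ = fun x => stdΦ 0 + ∫ t in (0:ℝ)..x, sφ t from funext h]
  exact continuous_const.add (sφ_int.continuous_primitive 0)

lemma stdΦ_atBot : Tendsto stdΦ atBot (𝓝 0) := by
  have : stdΦ = cdf (gaussianReal 0 1) := by
    ext x; rw [cdf_eq_real]; rfl
  rw [this]; exact tendsto_cdf_atBot _

lemma stdΦ_atTop : Tendsto stdΦ atTop (𝓝 1) := by
  have : stdΦ = cdf (gaussianReal 0 1) := by
    ext x; rw [cdf_eq_real]; rfl
  rw [this]; exact tendsto_cdf_atTop _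

lemma stdΦ_lb (x : ℝ) (hx : x ≤ 0) : sφ (x - 1) ≤ stdΦ x := by
  rw [stdΦ_eq_integral]
  have h1 : ∫ t in Set.Ioc (x-1) x, sφ t ≤ ∫ t in Set.Iic x, sφ t := by
    refine setIntegral_mono_set sφ_int.integrableOn
      (Filter.Eventually.of_forall (fun t => (sφ_pos t).le)) ?_
    exact Filter.Eventually.of_forall (fun t ht => ht.2)
  refine le_trans ?_ h1
  rw [← intervalIntegral.integral_of_le (by linarith : x - 1 ≤ x)]
  have h2 : ∫ _t in (x-1)..x, sφ (x-1) ≤ ∫ t in (x-1)..x, sφ t := by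
    refine intervalIntegral.integral_mono_on (by linarith) (by simp)
      sφ_int.intervalIntegrable ?_
    intro t ht
    rw [Set.mem_Icc] at ht
    have ht2 : t^2 ≤ (x-1)^2 := by nlinarith
    have he : rexp (-(x-1)^2/2) ≤ rexp (-t^2/2) := by
      apply Real.exp_le_exp.2; linarith
    have hc : (0:ℝ) ≤ (Real.sqrt (2*π))⁻¹ := by positivity
    exact mul_le_mul_of_nonneg_left he hc
  simpa using h2

lemma sφ_even (t : ℝ) : sφ (-t) = sφ t := by simp [sφ]

lemma sφ_hasDeriv (t : ℝ) : HasDerivAt (fun s => -sφ s) (t * sφ t) t := by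
  have h1 : HasDerivAt (fun s : ℝ => -s^2/2) (-t) t := by
    have := ((hasDerivAt_pow 2 t).neg).div_const 2
    refine this.congr_deriv ?_
    simp; ring
  have h2 := (h1.exp.const_mul ((Real.sqrt (2*π))⁻¹)).neg
  refine h2.congr_deriv ?_
  unfold sφ; ring

lemma sφ_tendsto_zero : Tendsto (fun t : ℝ => -sφ t) atTop (𝓝 0) := by
  have h1 : Tendsto (fun t : ℝ => -t^2/2) atTop atBot := by
    apply Filter.Tendsto.atBot_div_const two_pos
    exact tendsto_neg_atTop_atBot.comp (tendsto_pow_atTop two_ne_zero)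
  have h2 : Tendsto (fun t : ℝ => sφ t) atTop (𝓝 0) := by
    have := (Real.tendsto_exp_atBot.comp h1).const_mul ((Real.sqrt (2*π))⁻¹)
    simpa [sφ] using this
  simpa using h2.neg

lemma stdΦ_ub (x : ℝ) (hx : x ≤ -1) : stdΦ x ≤ sφ x := by
  have h1 : stdΦ x = ∫ t in Set.Ioi (-x), sφ t := by
    have h := integral_comp_neg_Ioi (c := -x) (f := sφ)
    simp_rw [sφ_even, neg_neg] at h
    rw [stdΦ_eq_integral, ← h]
  have hderiv : ∀ t ∈ Set.Ici (-x), HasDerivAt (fun s => -sφ s) (t * sφ t) t :=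
    fun t _ => sφ_hasDeriv t
  have hnn : ∀ t ∈ Set.Ioi (-x), 0 ≤ t * sφ t := by
    intro t ht
    have : (1:ℝ) ≤ t := by simp at ht ⊢; linarith
    exact mul_nonneg (by linarith) (sφ_pos t).le
  have hInt : IntegrableOn (fun t => t * sφ t) (Set.Ioi (-x)) :=
    integrableOn_Ioi_deriv_of_nonneg' hderiv hnn sφ_tendsto_zero
  have hval : ∫ t in Set.Ioi (-x), t * sφ t = sφ x := by
    rw [integral_Ioi_of_hasDerivAt_of_tendsto' hderiv hInt sφ_tendsto_zero]
    rw [← sφ_even x]; ring_nf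
  rw [h1, ← hval]
  refine setIntegral_mono_on sφ_int.integrableOn hInt measurableSet_Ioi ?_
  intro t ht
  have h2 : (1:ℝ) ≤ t := by simp at ht; linarith
  nlinarith [sφ_pos t]

lemma stdΦ_pos (x : ℝ) : 0 < stdΦ x := by
  rcases le_or_gt x 0 with h | h
  · exact lt_of_lt_of_le (sφ_pos _) (stdΦ_lb x h)
  · exact lt_of_lt_of_le (lt_of_lt_of_le (sφ_pos _) (stdΦ_lb 0 le_rfl))
      (stdΦ_mono h.le)

noncomputable def Qf (u : ℝ) : ℝ := sInf {x : ℝ | u ≤ stdΦ x}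

lemma Q_bddBelow {u : ℝ} (h0 : 0 < u) : BddBelow {x : ℝ | u ≤ stdΦ x} := by
  obtain ⟨x1, hx1⟩ := (stdΦ_atBot.eventually (eventually_lt_nhds h0)).exists
  exact ⟨x1, fun y hy => le_of_not_gt fun hlt =>
    absurd hy (not_le.2 (lt_of_le_of_lt (stdΦ_mono hlt.le) hx1))⟩

lemma Q_le {u M : ℝ} (h0 : 0 < u) (hM : u ≤ stdΦ M) : Qf u ≤ M :=
  csInf_le (Q_bddBelow h0) hM

lemma Q_spec {u : ℝ} (h0 : 0 < u) (h1 : u < 1) : stdΦ (Qf u) = u := by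
  obtain ⟨x2, hx2⟩ := (stdΦ_atTop.eventually (eventually_gt_nhds h1)).exists
  obtain ⟨x1, hx1⟩ := (stdΦ_atBot.eventually (eventually_lt_nhds h0)).exists
  have hS : IsClosed {x : ℝ | u ≤ stdΦ x} := isClosed_Ici.preimage stdΦ_continuous
  have hmem := hS.csInf_mem ⟨x2, hx2.le⟩ (Q_bddBelow h0)
  refine le_antisymm ?_ hmem
  have hmin : stdΦ (min x1 x2) ≤ stdΦ x1 := stdΦ_mono (min_le_left _ _)
  have hsub := intermediate_value_Icc (min_le_right x1 x2) stdΦ_continuous.continuousOn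
  obtain ⟨x0, _, hx0⟩ := hsub ⟨by linarith, hx2.le⟩
  have : Qf u ≤ x0 := Q_le h0 hx0.ge
  calc stdΦ (Qf u) ≤ stdΦ x0 := stdΦ_mono this
    _ = u := hx0

lemma Q_tendsto : Tendsto Qf (𝓝[>] (0:ℝ)) atBot := by
  rw [tendsto_atBot]
  intro M
  have h1 : ∀ᶠ u in 𝓝[>] (0:ℝ), u ≤ stdΦ M :=
    eventually_nhdsWithin_of_eventually_nhds
      ((isOpen_Iio.eventually_mem (show (0:ℝ) ∈ Set.Iio (stdΦ M) from stdΦ_pos M)).mono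
        (fun u hu => le_of_lt hu))
  filter_upwards [h1, self_mem_nhdsWithin] with u hu h0
  exact Q_le h0 hu

lemma aemeas_of_map_gauss {Ω : Type*} [MeasurableSpace Ω] {P : Measure Ω} {X : Ω → ℝ}
    (hX : Measure.map X P = gaussianReal 0 1) : AEMeasurable X P := by
  by_contra h
  have h0 := Measure.map_of_not_aemeasurable h
  rw [hX] at h0
  have h1 : (gaussianReal 0 1) Set.univ = 0 := by rw [h0]; rfl
  simp [measure_univ] at h1

lemma map_gauss_Iic {Ω : Type*} [MeasurableSpace Ω] {P : Measure Ω} {X : Ω → ℝ}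
    (hX : Measure.map X P = gaussianReal 0 1) (a : ℝ) :
    P (X ⁻¹' Set.Iic a) = ENNReal.ofReal (stdΦ a) := by
  rw [← Measure.map_apply_of_aemeasurable (aemeas_of_map_gauss hX) measurableSet_Iic, hX,
    stdΦ, ENNReal.ofReal_toReal (measure_ne_top _ _)]

lemma key {Ω : Type*} [MeasurableSpace Ω] (P : Measure Ω) [IsProbabilityMeasure P]
    (X Z R : Ω → ℝ)
    (hR : ∀ ω, R ω ∈ Set.Ioo (-1 : ℝ) 1)
    (hindep : iIndepFun ![X, Z, R] P)
    (Y : Ω → ℝ) (hY : Y = fun ω => R ω * X ω + Real.sqrt (1 - R ω ^ 2) * Z ω)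
    {ρ₀ : ℝ} (h0 : 0 < ρ₀) (h1 : ρ₀ < 1) {q : ℝ} (hq : q ≤ -1) :
    P (X ⁻¹' Set.Iic (q/ρ₀)) * (P (Z ⁻¹' Set.Iic 0) * P (R ⁻¹' Set.Ioi ρ₀))
      ≤ P {ω | X ω ≤ q ∧ Y ω ≤ q} := by
  classical
  set s : Fin 3 → Set Ω := ![X ⁻¹' Set.Iic (q/ρ₀), Z ⁻¹' Set.Iic 0, R ⁻¹' Set.Ioi ρ₀] with hs
  have hmeas : ∀ i, MeasurableSet[(inferInstance : MeasurableSpace ℝ).comap (![X, Z, R] i)] (s i) := by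
    intro i
    fin_cases i
    · exact ⟨Set.Iic (q/ρ₀), measurableSet_Iic, rfl⟩
    · exact ⟨Set.Iic 0, measurableSet_Iic, rfl⟩
    · exact ⟨Set.Ioi ρ₀, measurableSet_Ioi, rfl⟩
  have hprod := hindep.meas_iInter hmeas
  have hiInter : (⋂ i, s i) = (X ⁻¹' Set.Iic (q/ρ₀)) ∩ (Z ⁻¹' Set.Iic 0) ∩ (R ⁻¹' Set.Ioi ρ₀) := by
    ext ω
    simp [hs, Fin.forall_fin_succ, and_assoc]
  rw [hiInter, Fin.prod_univ_three] at hprod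
  simp only [hs, Matrix.cons_val_zero, Matrix.cons_val_one, Matrix.head_cons,
    Matrix.cons_val_two, Matrix.tail_cons] at hprod
  rw [← mul_assoc, ← hprod]
  refine measure_mono ?_
  rintro ω ⟨⟨hA, hB⟩, hD⟩
  simp only [Set.mem_preimage, Set.mem_Iic, Set.mem_Ioi] at hA hB hD
  have hρq : q / ρ₀ ≤ q := by
    rw [div_le_iff₀ h0]
    nlinarith
  have hXneg : X ω ≤ q := le_trans hA hρq
  constructor
  · exact hXneg
  · rw [hY]
    have hX0 : X ω < 0 := lt_of_le_of_lt hXneg (by linarith)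
    have h2 : R ω * X ω ≤ ρ₀ * X ω := by nlinarith
    have h3 : ρ₀ * X ω ≤ ρ₀ * (q / ρ₀) := by nlinarith
    have h4 : ρ₀ * (q / ρ₀) = q := by field_simp
    have h5 : Real.sqrt (1 - R ω ^ 2) * Z ω ≤ 0 :=
      mul_nonpos_of_nonneg_of_nonpos (Real.sqrt_nonneg _) hB
    simp only
    linarith

lemma sq_tendsto_atBot : Tendsto (fun q : ℝ => q^2) atBot atTop := by
  have h := (tendsto_pow_atTop (n := 2) two_ne_zero).comp
    (tendsto_abs_atBot_atTop (G := ℝ))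
  refine h.congr (fun q => ?_)
  simp [Function.comp, sq_abs]

lemma G_tendsto {ε ρ₀ c : ℝ} (hε : 0 < ε) (hρ : 0 < ρ₀) (ha : ρ₀⁻¹^2 < 1 + ε) (hc : 0 < c) :
    Tendsto (fun q : ℝ => (sφ q)^(-1-ε) * (c * sφ (q/ρ₀ - 1))) atBot atTop := by
  have hsq : (0:ℝ) < (Real.sqrt (2*π))⁻¹ := by positivity
  set K : ℝ := c * (((Real.sqrt (2*π))⁻¹)^(-1-ε) * (Real.sqrt (2*π))⁻¹) with hK
  have hKpos : 0 < K := by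
    have := Real.rpow_pos_of_pos hsq (-1-ε)
    positivity
  set a : ℝ := (1+ε)/2 - ρ₀⁻¹^2/2 with ha'
  have hapos : 0 < a := by rw [ha']; linarith
  set b : ℝ := ρ₀⁻¹ with hb
  set d : ℝ := b/(2*a) with hd'
  have hdb : b = 2*a*d := by rw [hd']; field_simp
  have hid : ∀ q : ℝ, (sφ q)^(-1-ε) * (c * sφ (q/ρ₀ - 1))
      = K * rexp (a*(q + d)^2 + (-1/2 - a*d^2)) := by
    intro q
    unfold sφ
    rw [Real.mul_rpow hsq.le (Real.exp_pos _).le, ← Real.exp_mul]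
    have hq : q / ρ₀ = q * b := by rw [hb, div_eq_mul_inv]
    rw [hq]
    have hE : -q^2/2 * (-1-ε) + -(q*b-1)^2/2 = a*(q + d)^2 + (-1/2 - a*d^2) := by
      linear_combination (-(q^2)) * ha' + q * hdb
    rw [← hE, Real.exp_add, hK]
    ring
  have h1 : Tendsto (fun q : ℝ => q + d) atBot atBot :=
    tendsto_atBot_add_const_right _ _ tendsto_id
  have h2 : Tendsto (fun q : ℝ => (q + d)^2) atBot atTop := sq_tendsto_atBot.comp h1
  have h3 := tendsto_atTop_add_const_right _ (-1/2 - a*d^2) (h2.const_mul_atTop hapos)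
  have h4 := (Real.tendsto_exp_atTop.comp h3).const_mul_atTop hKpos
  exact h4.congr (fun q => (hid q).symm)

theorem gaussian_mixture_near_asymptotic_dependence
    {Ω : Type*} [MeasurableSpace Ω] (P : Measure Ω) [IsProbabilityMeasure P]
    (X Z R : Ω → ℝ)
    (hX : Measure.map X P = gaussianReal 0 1)
    (hZ : Measure.map Z P = gaussianReal 0 1)
    (hR : ∀ ω, R ω ∈ Set.Ioo (-1 : ℝ) 1)
    (hRsup : ∀ ρ₀ < (1 : ℝ), 0 < P {ω | R ω > ρ₀})
    (hindep : iIndepFun ![X, Z, R] P)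
    (Y : Ω → ℝ) (hY : Y = fun ω => R ω * X ω + Real.sqrt (1 - R ω ^ 2) * Z ω)
    (Φinv : ℝ → ℝ)
    (hΦinv : Φinv = fun p => sInf {x : ℝ | p ≤ ((gaussianReal 0 1) (Set.Iic x)).toReal})
    (C : ℝ → ℝ)
    (hC : C = fun u => (P {ω | X ω ≤ Φinv u ∧ Y ω ≤ Φinv u}).toReal) :
    (∀ ε > (0 : ℝ),
      Filter.Tendsto (fun u : ℝ => u ^ (-1 - ε) * C u)
        (nhdsWithin 0 (Set.Ioi 0)) Filter.atTop) ∧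
    Filter.Tendsto (fun u : ℝ => Real.log u / Real.log (C u))
      (nhdsWithin 0 (Set.Ioi 0)) (nhds 1) := by
  have hQeq : Φinv = Qf := by rw [hΦinv]; rfl
  have hCnn : ∀ u, 0 ≤ C u := by intro u; rw [hC]; exact ENNReal.toReal_nonneg
  have hCu_le : ∀ u : ℝ, 0 < u → u < 1 → C u ≤ u := by
    intro u h0 h1
    rw [hC, hQeq]
    have hsub : {ω | X ω ≤ Qf u ∧ Y ω ≤ Qf u} ⊆ X ⁻¹' Set.Iic (Qf u) := fun ω h => h.1
    calc (P {ω | X ω ≤ Qf u ∧ Y ω ≤ Qf u}).toReal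
        ≤ (P (X ⁻¹' Set.Iic (Qf u))).toReal :=
          ENNReal.toReal_mono (measure_ne_top _ _) (measure_mono hsub)
      _ = stdΦ (Qf u) := by
          rw [map_gauss_Iic hX, ENNReal.toReal_ofReal (stdΦ_pos _).le]
      _ = u := Q_spec h0 h1
  have main : ∀ ε > (0:ℝ), Tendsto (fun u : ℝ => u ^ (-1 - ε) * C u) (𝓝[>] (0:ℝ)) atTop := by
    intro ε hε
    set ρ₀ : ℝ := (4+3*ε)/(4*(1+ε)) with hρ₀
    have hρpos : 0 < ρ₀ := by positivity
    have hρlt : ρ₀ < 1 := by rw [hρ₀, div_lt_one (by positivity)]; linarith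
    have hinv2 : ρ₀⁻¹^2 < 1+ε := by
      rw [hρ₀, inv_div, div_pow, div_lt_iff₀ (by positivity)]
      nlinarith [mul_pos hε hε, mul_pos (mul_pos hε hε) hε]
    have hPDpos : 0 < (P (R ⁻¹' Set.Ioi ρ₀)).toReal :=
      ENNReal.toReal_pos (hRsup ρ₀ hρlt).ne' (measure_ne_top _ _)
    set c : ℝ := stdΦ 0 * (P (R ⁻¹' Set.Ioi ρ₀)).toReal with hcdef
    have hcpos : 0 < c := mul_pos (stdΦ_pos 0) hPDpos
    have hG := (G_tendsto hε hρpos hinv2 hcpos).comp Q_tendsto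
    refine tendsto_atTop_mono' _ ?_ hG
    filter_upwards [self_mem_nhdsWithin, Q_tendsto.eventually_le_atBot (-1),
      eventually_nhdsWithin_of_eventually_nhds (eventually_lt_nhds one_pos)] with u h0u hq hu1
    have h0u : (0:ℝ) < u := h0u
    set q : ℝ := Qf u with hqdef
    have hspec : stdΦ q = u := Q_spec h0u hu1
    -- claim 1 : (sφ q)^(-1-ε) ≤ u^(-1-ε)
    have hub : u ≤ sφ q := hspec ▸ stdΦ_ub q hq
    have claim1 : (sφ q)^(-1-ε) ≤ u^(-1-ε) :=
      Real.rpow_le_rpow_of_nonpos h0u hub (by linarith)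
    -- claim 2 : c * sφ (q/ρ₀ - 1) ≤ C u
    have hkey := key P X Z R hR hindep Y hY hρpos hρlt hq
    have hcalc : (P (X ⁻¹' Set.Iic (q/ρ₀)) * (P (Z ⁻¹' Set.Iic 0) * P (R ⁻¹' Set.Ioi ρ₀))).toReal
        = stdΦ (q/ρ₀) * (stdΦ 0 * (P (R ⁻¹' Set.Ioi ρ₀)).toReal) := by
      rw [map_gauss_Iic hX, map_gauss_Iic hZ, ENNReal.toReal_mul, ENNReal.toReal_mul,
        ENNReal.toReal_ofReal (stdΦ_pos _).le, ENNReal.toReal_ofReal (stdΦ_pos _).le]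
    have claim2 : c * sφ (q/ρ₀ - 1) ≤ C u := by
      have hqρ : q / ρ₀ ≤ 0 := by
        apply div_nonpos_of_nonpos_of_nonneg (by linarith) hρpos.le
      have h5 : c * sφ (q/ρ₀ - 1) ≤ stdΦ (q/ρ₀) * (stdΦ 0 * (P (R ⁻¹' Set.Ioi ρ₀)).toReal) := by
        rw [hcdef, mul_comm (stdΦ 0 * _) (sφ _)] at *
        calc sφ (q/ρ₀ - 1) * (stdΦ 0 * (P (R ⁻¹' Set.Ioi ρ₀)).toReal)
            ≤ stdΦ (q/ρ₀) * (stdΦ 0 * (P (R ⁻¹' Set.Ioi ρ₀)).toReal) := by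
              apply mul_le_mul_of_nonneg_right (stdΦ_lb _ hqρ)
              exact mul_nonneg (stdΦ_pos 0).le ENNReal.toReal_nonneg
          _ = _ := by ring
      refine le_trans h5 ?_
      rw [← hcalc, hC, hQeq]
      exact ENNReal.toReal_mono (measure_ne_top _ _) hkey
    have hfin : (sφ q)^(-1-ε) * (c * sφ (q/ρ₀ - 1)) ≤ u^(-1-ε) * C u := by
      apply mul_le_mul claim1 claim2 (mul_nonneg hcpos.le (sφ_pos _).le) (Real.rpow_nonneg h0u.le _)
    exact hfin
  have pack : ∀ ε' : ℝ, 0 < ε' → ∀ᶠ u in 𝓝[>] (0:ℝ),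
      (1+ε') * Real.log u ≤ Real.log (C u) ∧ Real.log (C u) ≤ Real.log u ∧
      Real.log (C u) < 0 ∧ Real.log u < 0 := by
    intro ε' hε'
    filter_upwards [(main ε' hε').eventually_ge_atTop 1, self_mem_nhdsWithin,
      eventually_nhdsWithin_of_eventually_nhds (eventually_lt_nhds one_pos)] with u h1 h0 hu1
    have h0 : (0:ℝ) < u := h0
    have hup : 0 < u ^ ((1:ℝ)+ε') := Real.rpow_pos_of_pos h0 _
    have hpow : u ^ (-1-ε') = (u ^ ((1:ℝ)+ε'))⁻¹ := by
      rw [show (-1-ε' : ℝ) = -(1+ε') from by ring, Real.rpow_neg h0.le]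
    rw [hpow] at h1
    have h2 := mul_le_mul_of_nonneg_left h1 hup.le
    rw [mul_one, ← mul_assoc, mul_inv_cancel₀ hup.ne', one_mul] at h2
    have hC0 : 0 < C u := lt_of_lt_of_le hup h2
    have hCle : C u ≤ u := hCu_le u h0 hu1
    have hL : Real.log u < 0 := Real.log_neg h0 hu1
    have hM : Real.log (C u) < 0 := Real.log_neg hC0 (lt_of_le_of_lt hCle hu1)
    have hML : Real.log (C u) ≤ Real.log u := Real.log_le_log hC0 hCle
    have hM2 : (1+ε') * Real.log u ≤ Real.log (C u) := by
      have := Real.log_le_log hup h2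
      rwa [Real.log_rpow h0] at this
    exact ⟨hM2, hML, hM, hL⟩
  refine ⟨main, ?_⟩
  rw [tendsto_order]
  constructor
  · intro a ha
    obtain ⟨ε', hε', haε⟩ : ∃ ε' : ℝ, 0 < ε' ∧ a < 1/(1+ε') := by
      rcases le_or_gt a 0 with h | h
      · exact ⟨1, one_pos, lt_of_le_of_lt h (by norm_num)⟩
      · refine ⟨(1-a)/(2*a), div_pos (by linarith) (by linarith), ?_⟩
        have h1a : 1 + (1-a)/(2*a) = (1+a)/(2*a) := by field_simp; ring
        rw [h1a, one_div_div, lt_div_iff₀ (by positivity)]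
        nlinarith
    filter_upwards [pack ε' hε'] with u ⟨hM2, hML, hM, hL⟩
    have hnM : 0 < -Real.log (C u) := by linarith
    refine lt_of_lt_of_le haε ?_
    rw [show Real.log u / Real.log (C u) = (-Real.log u)/(-Real.log (C u)) from
      (neg_div_neg_eq _ _).symm, le_div_iff₀ hnM]
    have h9 : -Real.log (C u) ≤ (1+ε') * (-Real.log u) := by
      rw [mul_neg]; exact neg_le_neg hM2
    have h10 := mul_le_mul_of_nonneg_left h9 (le_of_lt (by positivity : (0:ℝ) < 1/(1+ε')))
    calc 1/(1+ε') * -Real.log (C u) ≤ 1/(1+ε') * ((1+ε') * (-Real.log u)) := h10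
      _ = -Real.log u := by field_simp
  · intro b hb
    filter_upwards [pack 1 one_pos] with u ⟨hM2, hML, hM, hL⟩
    have hnM : 0 < -Real.log (C u) := by linarith
    refine lt_of_le_of_lt ?_ hb
    rw [show Real.log u / Real.log (C u) = (-Real.log u)/(-Real.log (C u)) from
      (neg_div_neg_eq _ _).symm, div_le_one hnM]
    linarith
end

section
/- With the setup of the Gaussian correlation mixture (X standard normal, Y = ρX + √(1-ρ²)Z, Z standard normal, all independent, ρ ∈ (-1,1)), for every ρ₀ ∈ (0,1) and u ∈ (0,1/2): P(X > Φ^{-1}(1-u), Y > Φ^{-1}(1-u)) ≥ (1/2) P(ρ > ρ₀) P(X > Φ^{-1}(1-u)/ρ₀). -/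
open MeasureTheory ProbabilityTheory Real Filter

lemma gauss_neg_map : Measure.map (fun x => -x) (gaussianReal 0 1) = gaussianReal 0 1 := by
  have := gaussianReal_map_const_mul (μ := 0) (v := 1) (-1)
  simpa using this

lemma gauss_Ioi_zero : (gaussianReal 0 1) (Set.Ioi (0:ℝ)) = 1/2 := by
  have hsingle : (gaussianReal 0 1) {(0:ℝ)} = 0 :=
    gaussianReal_absolutelyContinuous 0 one_ne_zero (measure_singleton 0)
  have hIic : (gaussianReal 0 1) (Set.Iic (0:ℝ)) = (gaussianReal 0 1) (Set.Ici (0:ℝ)) := by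
    conv_lhs => rw [← gauss_neg_map]
    rw [Measure.map_apply (measurable_neg) measurableSet_Iic]
    congr 1
    ext x; simp
  have hIci : (gaussianReal 0 1) (Set.Ici (0:ℝ)) = (gaussianReal 0 1) (Set.Ioi (0:ℝ)) := by
    have he : (Set.Ici (0:ℝ)) = Set.Ioi 0 ∪ {0} := by ext x; simp [le_iff_lt_or_eq, or_comm]
    rw [he]
    refine le_antisymm ?_ (measure_mono Set.subset_union_left)
    calc (gaussianReal 0 1) (Set.Ioi 0 ∪ {0})
        ≤ (gaussianReal 0 1) (Set.Ioi 0) + (gaussianReal 0 1) {(0:ℝ)} := measure_union_le _ _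
    _ = (gaussianReal 0 1) (Set.Ioi 0) := by rw [hsingle, add_zero]
  have hsum : (gaussianReal 0 1) (Set.Iic (0:ℝ)) + (gaussianReal 0 1) (Set.Ioi (0:ℝ)) = 1 := by
    rw [← measure_union (by simp [Set.disjoint_left]) measurableSet_Ioi]
    simp [Set.Iic_union_Ioi]
  rw [hIic, hIci] at hsum
  have h2 : (2:ENNReal) * (gaussianReal 0 1) (Set.Ioi (0:ℝ)) = 1 := by rw [two_mul, hsum]
  rw [ENNReal.eq_div_iff (by norm_num) (by norm_num), ← h2]

lemma gauss_Iic_zero : (gaussianReal 0 1) (Set.Iic (0:ℝ)) = 1/2 := by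
  have hsum : (gaussianReal 0 1) (Set.Iic (0:ℝ)) + (gaussianReal 0 1) (Set.Ioi (0:ℝ)) = 1 := by
    rw [← measure_union (by simp [Set.disjoint_left]) measurableSet_Ioi]
    simp [Set.Iic_union_Ioi]
  rw [gauss_Ioi_zero] at hsum
  have h : (gaussianReal 0 1) (Set.Iic (0:ℝ)) = 1 - 1/2 :=
    ENNReal.eq_sub_of_add_eq (by norm_num) hsum
  rw [h]; norm_num

lemma Phi_inv_nonneg {p : ℝ} (hp : 1/2 < p) (hp1 : p < 1) :
    0 ≤ sInf {x : ℝ | p ≤ ((gaussianReal 0 1) (Set.Iic x)).toReal} := by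
  refine le_csInf ?_ ?_
  · have h1 : Tendsto (fun x => (gaussianReal 0 1) (Set.Iic x)) atTop
        (nhds ((gaussianReal 0 1) Set.univ)) := tendsto_measure_Iic_atTop _
    rw [measure_univ] at h1
    have h2 : Tendsto (fun x => ((gaussianReal 0 1) (Set.Iic x)).toReal) atTop (nhds 1) := by
      have := (ENNReal.tendsto_toReal (a := 1) (by norm_num)).comp h1
      exact this
    have h3 : ∀ᶠ x in atTop, p ≤ ((gaussianReal 0 1) (Set.Iic x)).toReal :=
      h2.eventually_const_le hp1
    obtain ⟨x, hx⟩ := h3.exists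
    exact ⟨x, hx⟩
  · intro x hx
    by_contra h
    push_neg at h
    have hle : (gaussianReal 0 1) (Set.Iic x) ≤ (gaussianReal 0 1) (Set.Iic (0:ℝ)) :=
      measure_mono (Set.Iic_subset_Iic.mpr h.le)
    rw [gauss_Iic_zero] at hle
    have : ((gaussianReal 0 1) (Set.Iic x)).toReal ≤ (1/2 : ℝ) := by
      have := ENNReal.toReal_mono (by norm_num) hle
      simpa using this
    linarith [Set.mem_setOf_eq ▸ hx]

theorem gaussian_mixture_joint_tail_lower_bound
    {Ω : Type*} [MeasurableSpace Ω] (P : Measure Ω) [IsProbabilityMeasure P]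
    (X Z R : Ω → ℝ)
    (hX : Measure.map X P = gaussianReal 0 1)
    (hZ : Measure.map Z P = gaussianReal 0 1)
    (hR : ∀ ω, R ω ∈ Set.Ioo (-1 : ℝ) 1)
    (hindep : iIndepFun ![X, Z, R] P)
    (Y : Ω → ℝ) (hY : Y = fun ω => R ω * X ω + Real.sqrt (1 - R ω ^ 2) * Z ω)
    (Φinv : ℝ → ℝ)
    (hΦinv : Φinv = fun p => sInf {x : ℝ | p ≤ ((gaussianReal 0 1) (Set.Iic x)).toReal})
    (ρ₀ : ℝ) (hρ₀ : ρ₀ ∈ Set.Ioo (0 : ℝ) 1)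
    (u : ℝ) (hu : u ∈ Set.Ioo (0 : ℝ) (1 / 2)) :
    P {ω | X ω > Φinv (1 - u) ∧ Y ω > Φinv (1 - u)} ≥
      (1 / 2 : ENNReal) * P {ω | R ω > ρ₀} * P {ω | X ω > Φinv (1 - u) / ρ₀} := by
  obtain ⟨hρ0, hρ1⟩ := hρ₀
  obtain ⟨hu0, hu1⟩ := hu
  set a := Φinv (1 - u) with ha
  have haR : 0 ≤ a := by
    rw [ha, hΦinv]
    exact Phi_inv_nonneg (by linarith) (by linarith)
  -- the three events
  set s : Fin 3 → Set Ω := ![X ⁻¹' Set.Ioi (a / ρ₀), Z ⁻¹' Set.Ioi 0, R ⁻¹' Set.Ioi ρ₀]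
    with hs
  -- inclusion
  have hsub : (⋂ i, s i) ⊆ {ω | X ω > a ∧ Y ω > a} := by
    intro ω hω
    simp only [Set.mem_iInter] at hω
    have h0 := hω 0
    have h1 := hω 1
    have h2 := hω 2
    simp only [hs, Matrix.cons_val_zero, Matrix.cons_val_one, Matrix.head_cons,
      Matrix.cons_val_two, Matrix.tail_cons, Set.mem_preimage, Set.mem_Ioi] at h0 h1 h2
    have haρ : a / ρ₀ ≥ a := by
      rw [ge_iff_le, le_div_iff₀ hρ0]
      nlinarith
    have hXpos : 0 < X ω := lt_of_le_of_lt (div_nonneg haR hρ0.le) h0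
    constructor
    · exact lt_of_lt_of_le (lt_of_le_of_lt haρ h0) le_rfl
    · rw [hY]
      have hRX : ρ₀ * X ω < R ω * X ω := by
        exact mul_lt_mul_of_pos_right h2 hXpos
      have h4 : a < ρ₀ * X ω := by
        rw [← div_lt_iff₀' hρ0] at *
        calc a / ρ₀ < X ω := h0
        _ = X ω := rfl
      have hsq : 0 ≤ Real.sqrt (1 - R ω ^ 2) * Z ω :=
        mul_nonneg (Real.sqrt_nonneg _) h1.le
      simp only [gt_iff_lt]
      nlinarith
  have hmono : P (⋂ i, s i) ≤ P {ω | X ω > a ∧ Y ω > a} := measure_mono hsub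
  -- independence
  have hmeas : ∀ i, MeasurableSet[(fun _ : Fin 3 => (inferInstance : MeasurableSpace ℝ)) i
      |>.comap (![X, Z, R] i)] (s i) := by
    intro i
    fin_cases i
    · exact ⟨Set.Ioi (a / ρ₀), measurableSet_Ioi, rfl⟩
    · exact ⟨Set.Ioi 0, measurableSet_Ioi, rfl⟩
    · exact ⟨Set.Ioi ρ₀, measurableSet_Ioi, rfl⟩
  have hindep3 : P (⋂ i, s i) = ∏ i, P (s i) := hindep.meas_iInter hmeas
  have hprod : ∏ i, P (s i) = P (s 0) * P (s 1) * P (s 2) := by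
    rw [Fin.prod_univ_three]
  -- P(Z > 0) = 1/2
  have hZae : AEMeasurable Z P := by
    by_contra h
    rw [Measure.map_of_not_aemeasurable h] at hZ
    exact (IsProbabilityMeasure.ne_zero (gaussianReal 0 1)) hZ.symm
  have hZhalf : P (Z ⁻¹' Set.Ioi 0) = 1/2 := by
    rw [← Measure.map_apply_of_aemeasurable hZae measurableSet_Ioi, hZ]
    exact gauss_Ioi_zero
  -- finish
  calc (1 / 2 : ENNReal) * P {ω | R ω > ρ₀} * P {ω | X ω > a / ρ₀}
      = P (s 0) * P (s 1) * P (s 2) := by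
        rw [hs]
        simp only [Matrix.cons_val_zero, Matrix.cons_val_one, Matrix.head_cons,
          Matrix.cons_val_two, Matrix.tail_cons]
        rw [hZhalf]
        have e1 : {ω | R ω > ρ₀} = R ⁻¹' Set.Ioi ρ₀ := rfl
        have e2 : {ω | X ω > a / ρ₀} = X ⁻¹' Set.Ioi (a / ρ₀) := rfl
        rw [e1, e2]
        ring
  _ = P (⋂ i, s i) := by rw [hindep3, hprod]
  _ ≤ P {ω | X ω > a ∧ Y ω > a} := hmono
end
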